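/- arXiv:1112.4816 — 6 statements merged into one kernel-verified Lean document; each statement's English description precedes it below -/
import Mathlib

section
/- Let A = ∏_p A_p be a countable product of compact groups with normalized Haar measures ν_p, ν = ∏_p ν_p, and χ = ∏_p χ_p: A → {±1} a non-trivial character where each χ_p: A_p → {±1} is a continuous quadratic character, trivial for almost all p. Let G = ker χ and S = ∏_p S_p with each S_p ⊆ A_p measurable of positive measure. Then ν(G ∩ S)/ν(G) = (1 + ∏_p E_p)·ν(S), where E_p = (1/ν_p(S_p))·∫_{S_p} χ_p dν_p. -/
open MeasureTheory Filter Topology ENNReal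

private lemma aux_prod_pm {ι : Type*} (F : Finset ι) (f : ι → ℝ)
    (h : ∀ i ∈ F, f i = 1 ∨ f i = -1) :
    (∏ i ∈ F, f i) = 1 ∨ (∏ i ∈ F, f i) = -1 := by
  refine Finset.prod_induction f (fun x => x = 1 ∨ x = -1) ?_ (Or.inl rfl) h
  rintro x y (rfl | rfl) (rfl | rfl) <;> norm_num

private lemma aux_even_sum {ι : Type*} [DecidableEq ι] (F : Finset ι) (a b : ι → ℝ) :
    2 * ∑ E ∈ F.powerset.filter (fun E => Even E.card),
        ((∏ i ∈ E, b i) * ∏ i ∈ F \ E, a i)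
      = (∏ i ∈ F, (a i + b i)) + ∏ i ∈ F, (a i - b i) := by
  have h1 : (∏ i ∈ F, (a i + b i))
      = ∑ E ∈ F.powerset, (∏ i ∈ E, b i) * ∏ i ∈ F \ E, a i := by
    rw [show (fun i => a i + b i) = fun i => b i + a i from funext fun i => add_comm _ _]
    exact Finset.prod_add b a F
  have h2 : (∏ i ∈ F, (a i - b i))
      = ∑ E ∈ F.powerset, ((-1 : ℝ) ^ E.card * ((∏ i ∈ E, b i) * ∏ i ∈ F \ E, a i)) := by
    rw [show (fun i => a i - b i) = fun i => (-b i) + a i from funext fun i => by ring]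
    rw [Finset.prod_add (fun i => -b i) a F]
    refine Finset.sum_congr rfl fun E _ => ?_
    rw [show (∏ i ∈ E, -b i) = ∏ i ∈ E, (-1 : ℝ) * b i from by simp]
    rw [Finset.prod_mul_distrib, Finset.prod_const]
    ring
  rw [h1, h2, ← Finset.sum_add_distrib]
  rw [show ∑ E ∈ F.powerset, ((∏ i ∈ E, b i) * ∏ i ∈ F \ E, a i
      + (-1 : ℝ) ^ E.card * ((∏ i ∈ E, b i) * ∏ i ∈ F \ E, a i))
      = ∑ E ∈ F.powerset, (if Even E.card then 2 * ((∏ i ∈ E, b i) * ∏ i ∈ F \ E, a i) else 0)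
    from Finset.sum_congr rfl fun E _ => by
      by_cases h : Even E.card
      · rw [if_pos h, h.neg_one_pow]; ring
      · rw [if_neg h, (Nat.not_even_iff_odd.1 h).neg_one_pow]; ring]
  rw [← Finset.sum_filter, Finset.mul_sum]

/-- Character sums over a countable product of compact groups: for `A = ∏ p, A p` with
normalized Haar measures `ν p`, product (Haar) measure `μ`, and a non-trivial character
`χ = ∏ p, χ p` with each `χ p : A p → {±1}` continuous and almost all trivial, with kernel
`G`, and `S = ∏ p, S p` with each `S p` measurable of positive measure, one has
`μ(G ∩ S)/μ(G) = (1 + ∏ p, E p) · μ(S)` where `E p` is the average of `χ p` on `S p`. -/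
theorem character_sum_density_product
    {ι : Type*} [Countable ι] {A : ι → Type*} [∀ i, Group (A i)]
    [∀ i, TopologicalSpace (A i)] [∀ i, IsTopologicalGroup (A i)] [∀ i, CompactSpace (A i)]
    [∀ i, MeasurableSpace (A i)] [∀ i, BorelSpace (A i)]
    (ν : ∀ i, Measure (A i)) [∀ i, (ν i).IsHaarMeasure] [∀ i, IsProbabilityMeasure (ν i)]
    (μ : Measure (∀ i, A i)) [μ.IsHaarMeasure] [IsProbabilityMeasure μ]
    (hμ : ∀ T : (i : ι) → Set (A i), (∀ i, MeasurableSet (T i)) →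
      {i | T i ≠ Set.univ}.Finite → μ (Set.univ.pi T) = ∏ᶠ i, ν i (T i))
    (χ : ∀ i, A i →* ℝ) (hχc : ∀ i, Continuous (χ i))
    (hval : ∀ i a, χ i a = 1 ∨ χ i a = -1)
    (hfin : {i | χ i ≠ 1}.Finite) (hnt : ∃ i, χ i ≠ 1)
    (S : ∀ i, Set (A i)) (hS : ∀ i, MeasurableSet (S i)) (hpos : ∀ i, 0 < ν i (S i)) :
    (μ ({x : ∀ i, A i | ∏ᶠ i, χ i (x i) = 1} ∩ Set.univ.pi S)).toReal
        / (μ {x : ∀ i, A i | ∏ᶠ i, χ i (x i) = 1}).toReal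
      = (1 + ∏ᶠ i, (∫ x in S i, χ i x ∂(ν i)) / (ν i (S i)).toReal)
          * (μ (Set.univ.pi S)).toReal := by
  classical
  obtain ⟨i₀, hi₀⟩ := hnt
  have : Nonempty ι := ⟨i₀⟩
  set F : Finset ι := hfin.toFinset with hFdef
  have hmemF : ∀ i, i ∈ F ↔ χ i ≠ 1 := fun i => hfin.mem_toFinset
  have hnotF : ∀ i ∉ F, χ i = 1 := fun i hi => not_not.1 (fun h => hi ((hmemF i).2 h))
  -- the finprod of character values is a finite product
  have hprodx : ∀ x : ∀ i, A i, (∏ᶠ i, χ i (x i)) = ∏ i ∈ F, χ i (x i) := by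
    intro x
    refine finprod_eq_prod_of_mulSupport_subset _ fun i hi => ?_
    rw [Function.mem_mulSupport] at hi
    rw [Finset.mem_coe, hmemF]
    intro h
    rw [h] at hi
    exact hi rfl
  set g : (∀ i, A i) → ℝ := fun x => ∏ i ∈ F, χ i (x i) with hgdef
  have hgm : Measurable g :=
    Finset.measurable_prod _ fun i _ => (hχc i).measurable.comp (measurable_pi_apply i)
  have hgpm : ∀ x, g x = 1 ∨ g x = -1 := fun x => aux_prod_pm F _ fun i _ => hval i (x i)
  have hGeq : {x : ∀ i, A i | ∏ᶠ i, χ i (x i) = 1} = g ⁻¹' {1} := by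
    ext x; simp [hprodx x]; rfl
  -- μ G = 1/2
  have hG : μ {x : ∀ i, A i | ∏ᶠ i, χ i (x i) = 1} = 1 / 2 := by
    obtain ⟨y₀, hy₀⟩ : ∃ y, χ i₀ y ≠ 1 := by
      by_contra h
      push_neg at h
      exact hi₀ (MonoidHom.ext fun y => by simp [h y])
    have hy₀' : χ i₀ y₀ = -1 := (hval i₀ y₀).resolve_left hy₀
    set a : ∀ i, A i := Function.update (fun i => 1) i₀ y₀ with hadef
    have hga : ∀ x, g (a * x) = - g x := by
      intro x
      have h1 : ∀ i, χ i ((a * x) i) = χ i (a i) * χ i (x i) := fun i => by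
        simp [map_mul]
      have h2 : (∏ i ∈ F, χ i (a i)) = -1 := by
        rw [Finset.prod_eq_single i₀]
        · simp [hadef, hy₀']
        · intro b _ hb
          simp [hadef, Function.update_of_ne hb]
        · intro h
          exact absurd ((hmemF i₀).2 hi₀) h
      simp only [hgdef]
      calc (∏ i ∈ F, χ i ((a * x) i)) = ∏ i ∈ F, (χ i (a i) * χ i (x i)) :=
            Finset.prod_congr rfl fun i _ => h1 i
        _ = (∏ i ∈ F, χ i (a i)) * ∏ i ∈ F, χ i (x i) := Finset.prod_mul_distrib
        _ = - ∏ i ∈ F, χ i (x i) := by rw [h2]; ring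
    have hpre : (fun x => a * x) ⁻¹' (g ⁻¹' {1}) = g ⁻¹' {-1} := by
      ext x
      simp only [Set.mem_preimage, Set.mem_singleton_iff, hga x]
      constructor
      · intro h; linarith
      · intro h; rw [h]; norm_num
    have hinv : μ (g ⁻¹' {-1}) = μ (g ⁻¹' {1}) := by
      rw [← hpre, measure_preimage_mul μ a _]
    have hunion : g ⁻¹' {1} ∪ g ⁻¹' {-1} = Set.univ := by
      ext x
      simp only [Set.mem_union, Set.mem_preimage, Set.mem_singleton_iff, Set.mem_univ, iff_true]
      exact hgpm x
    have hdisj : Disjoint (g ⁻¹' {1}) (g ⁻¹' {-1}) := by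
      rw [Set.disjoint_left]
      intro x h1 h2
      simp only [Set.mem_preimage, Set.mem_singleton_iff] at h1 h2
      rw [h1] at h2; norm_num at h2
    have hsum : μ (g ⁻¹' {1}) + μ (g ⁻¹' {-1}) = 1 := by
      rw [← measure_union hdisj (hgm (measurableSet_singleton _)), hunion, measure_univ]
    rw [hGeq]
    rw [hinv] at hsum
    rw [ENNReal.eq_div_iff two_ne_zero ENNReal.ofNat_ne_top, two_mul]
    exact hsum
  -- the factorization lemma
  obtain ⟨e, he⟩ := exists_surjective_nat ι
  set J : ℕ → Finset ι := fun n => (Finset.range n).image e with hJdef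
  have hJmono : Monotone J := fun m n hmn =>
    Finset.image_subset_image (Finset.range_subset_range.2 hmn)
  have hJall : ∀ i, ∃ n, i ∈ J n := by
    intro i
    obtain ⟨k, hk⟩ := he i
    exact ⟨k + 1, Finset.mem_image.2 ⟨k, Finset.mem_range.2 (Nat.lt_succ_self _), hk⟩⟩
  set c : ℝ≥0∞ := μ (Set.univ.pi fun i => if i ∈ F then Set.univ else S i) with hcdef
  have step : ∀ T : ∀ i, Set (A i), (∀ i, MeasurableSet (T i)) →
      Tendsto (fun n => (∏ i ∈ F, ν i (T i)) * ∏ i ∈ (J n) \ F, ν i (S i)) atTop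
        (𝓝 (μ (Set.univ.pi fun i => if i ∈ F then T i else S i))) := by
    intro T hT
    set B : ℕ → Set (∀ i, A i) := fun n =>
      Set.univ.pi fun i => if i ∈ F then T i else if i ∈ J n then S i else Set.univ with hBdef
    have hBm : ∀ n, MeasurableSet (B n) := by
      intro n
      refine MeasurableSet.univ_pi fun i => ?_
      split_ifs
      exacts [hT i, hS i, MeasurableSet.univ]
    have hBanti : Antitone B := by
      intro m n hmn x hx
      rw [hBdef, Set.mem_univ_pi] at hx ⊢
      intro i
      have h := hx i
      by_cases h1 : i ∈ F
      · simpa only [if_pos h1] using h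
      · by_cases h2 : i ∈ J m
        · simp only [if_neg h1, if_pos h2, if_pos (hJmono hmn h2)] at h ⊢
          exact h
        · simp [h1, h2]
    have hInter : ⋂ n, B n = Set.univ.pi fun i => if i ∈ F then T i else S i := by
      ext x
      simp only [Set.mem_iInter, hBdef, Set.mem_univ_pi]
      constructor
      · intro h i
        by_cases h1 : i ∈ F
        · simpa only [if_pos h1] using h 0 i
        · obtain ⟨n, hn⟩ := hJall i
          simpa only [if_neg h1, if_pos hn] using h n i
      · intro h n i
        by_cases h1 : i ∈ F
        · simpa only [if_pos h1] using h i
        · by_cases h2 : i ∈ J n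
          · simpa only [if_neg h1, if_pos h2] using h i
          · simp [h1, h2]
    have hBval : ∀ n, μ (B n) = (∏ i ∈ F, ν i (T i)) * ∏ i ∈ (J n) \ F, ν i (S i) := by
      intro n
      have hmeas : ∀ i, MeasurableSet
          (if i ∈ F then T i else if i ∈ J n then S i else Set.univ) := by
        intro i
        split_ifs
        exacts [hT i, hS i, MeasurableSet.univ]
      have hfin' : {i | (if i ∈ F then T i else if i ∈ J n then S i else Set.univ)
          ≠ Set.univ}.Finite := by
        refine Set.Finite.subset (F ∪ J n).finite_toSet fun i hi => ?_
        simp only [Set.mem_setOf_eq] at hi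
        rw [Finset.coe_union, Set.mem_union]
        by_contra h
        push_neg at h
        rw [if_neg (fun hh => h.1 (Finset.mem_coe.2 hh)), if_neg (fun hh => h.2 (Finset.mem_coe.2 hh))] at hi
        exact hi rfl
      rw [hBdef, hμ _ hmeas hfin']
      rw [finprod_eq_prod_of_mulSupport_subset _
        (s := F ∪ J n) (fun i hi => ?_)]
      · have hsplit : F ∪ J n = F ∪ (J n \ F) := by
          rw [Finset.union_sdiff_self_eq_union]
        rw [hsplit, Finset.prod_union Finset.disjoint_sdiff]
        congr 1
        · refine Finset.prod_congr rfl fun i hi => ?_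
          rw [if_pos hi]
        · refine Finset.prod_congr rfl fun i hi => ?_
          rw [Finset.mem_sdiff] at hi
          rw [if_neg hi.2, if_pos hi.1]
      · rw [Function.mem_mulSupport] at hi
        rw [Finset.coe_union, Set.mem_union]
        by_contra h
        push_neg at h
        rw [if_neg (fun hh => h.1 (Finset.mem_coe.2 hh)), if_neg (fun hh => h.2 (Finset.mem_coe.2 hh)), measure_univ] at hi
        exact hi rfl
    have := tendsto_measure_iInter_atTop (μ := μ)
      (fun n => (hBm n).nullMeasurableSet) hBanti ⟨0, measure_ne_top μ _⟩
    rw [hInter] at this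
    exact this.congr hBval
  have hQ : Tendsto (fun n => ∏ i ∈ (J n) \ F, ν i (S i)) atTop (𝓝 c) := by
    have := step (fun _ => Set.univ) (fun _ => MeasurableSet.univ)
    simpa using this
  have key : ∀ T : ∀ i, Set (A i), (∀ i, MeasurableSet (T i)) →
      μ (Set.univ.pi fun i => if i ∈ F then T i else S i) = (∏ i ∈ F, ν i (T i)) * c := by
    intro T hT
    refine tendsto_nhds_unique (step T hT) ?_
    exact ENNReal.Tendsto.const_mul hQ
      (Or.inr (ENNReal.prod_lt_top fun i _ => measure_lt_top _ _).ne)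
  -- the characters' kernels
  set K : ∀ i, Set (A i) := fun i => χ i ⁻¹' {1} with hKdef
  set L : ∀ i, Set (A i) := fun i => χ i ⁻¹' {-1} with hLdef
  have hKm : ∀ i, MeasurableSet (K i) := fun i =>
    (hχc i).measurable (measurableSet_singleton _)
  have hLm : ∀ i, MeasurableSet (L i) := fun i =>
    (hχc i).measurable (measurableSet_singleton _)
  set TE : Finset ι → ∀ i, Set (A i) :=
    fun E i => if i ∈ E then S i ∩ L i else S i ∩ K i with hTEdef
  set D : Finset ι → Set (∀ i, A i) :=
    fun E => Set.univ.pi fun i => if i ∈ F then TE E i else S i with hDdef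
  set filt : Finset (Finset ι) := F.powerset.filter (fun E => Even E.card) with hfiltdef
  have hchar : ∀ E : Finset ι, ∀ x, x ∈ D E → ∀ i ∈ F, (i ∈ E ↔ χ i (x i) = -1) := by
    intro E x hx i hiF
    have h := (Set.mem_univ_pi.1 hx) i
    rw [if_pos hiF] at h
    constructor
    · intro hiE
      rw [hTEdef] at h
      simp only [if_pos hiE] at h
      exact h.2
    · intro hv
      by_contra hiE
      rw [hTEdef] at h
      simp only [if_neg hiE] at h
      have h1 : χ i (x i) = 1 := h.2
      rw [h1] at hv
      norm_num at hv
  have hdecomp : {x : ∀ i, A i | ∏ᶠ i, χ i (x i) = 1} ∩ Set.univ.pi S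
      = ⋃ E ∈ filt, D E := by
    ext x
    simp only [Set.mem_inter_iff, Set.mem_setOf_eq, Set.mem_iUnion, exists_prop]
    constructor
    · rintro ⟨hx1, hx2⟩
      rw [hprodx x] at hx1
      set E : Finset ι := F.filter (fun i => χ i (x i) = -1) with hEdef
      have hEF : E ⊆ F := Finset.filter_subset _ _
      have hcard : (-1 : ℝ) ^ E.card = 1 := by
        have hsplit := Finset.prod_filter_mul_prod_filter_not F
          (fun i => χ i (x i) = -1) (fun i => χ i (x i))
        have h1 : (∏ i ∈ F.filter (fun i => χ i (x i) = -1), χ i (x i))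
            = (-1 : ℝ) ^ E.card := by
          rw [show (∏ i ∈ F.filter (fun i => χ i (x i) = -1), χ i (x i))
              = ∏ _i ∈ E, (-1 : ℝ) from Finset.prod_congr rfl
                (fun i hi => (Finset.mem_filter.1 hi).2), Finset.prod_const]
        have h2 : (∏ i ∈ F.filter (fun i => ¬ χ i (x i) = -1), χ i (x i)) = 1 :=
          Finset.prod_eq_one fun i hi =>
            (hval i (x i)).resolve_right (Finset.mem_filter.1 hi).2
        rw [h1, h2, mul_one, hx1] at hsplit
        exact hsplit
      have hEfilt : E ∈ filt := by
        rw [hfiltdef, Finset.mem_filter, Finset.mem_powerset]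
        exact ⟨hEF, (neg_one_pow_eq_one_iff_even (by norm_num : (-1:ℝ) ≠ 1)).1 hcard⟩
      refine ⟨E, hEfilt, ?_⟩
      rw [hDdef]
      simp only [Set.mem_univ_pi]
      intro i
      by_cases hiF : i ∈ F
      · rw [if_pos hiF]
        simp only [hTEdef]
        by_cases hneg : χ i (x i) = -1
        · have hiE : i ∈ E := by
            rw [hEdef, Finset.mem_filter]; exact ⟨hiF, hneg⟩
          rw [if_pos hiE]
          exact ⟨Set.mem_univ_pi.1 hx2 i, hneg⟩
        · have hiE : i ∉ E := by
            rw [hEdef, Finset.mem_filter]; exact fun hh => hneg hh.2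
          rw [if_neg hiE]
          exact ⟨Set.mem_univ_pi.1 hx2 i, (hval i (x i)).resolve_right hneg⟩
      · rw [if_neg hiF]
        exact Set.mem_univ_pi.1 hx2 i
    · rintro ⟨E, hEfilt, hxE⟩
      rw [hfiltdef, Finset.mem_filter, Finset.mem_powerset] at hEfilt
      obtain ⟨hEF, hEven⟩ := hEfilt
      have hxS : x ∈ Set.univ.pi S := by
        rw [Set.mem_univ_pi]
        intro i
        have h := (Set.mem_univ_pi.1 hxE) i
        by_cases hiF : i ∈ F
        · rw [if_pos hiF, hTEdef] at h
          by_cases hiE : i ∈ E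
          · simp only [if_pos hiE] at h; exact h.1
          · simp only [if_neg hiE] at h; exact h.1
        · rw [if_neg hiF] at h; exact h
      refine ⟨?_, hxS⟩
      rw [hprodx x, ← Finset.prod_sdiff hEF]
      have h1 : (∏ i ∈ E, χ i (x i)) = (-1 : ℝ) ^ E.card := by
        rw [show (∏ i ∈ E, χ i (x i)) = ∏ _i ∈ E, (-1 : ℝ) from
          Finset.prod_congr rfl fun i hi => (hchar E x hxE i (hEF hi)).1 hi,
          Finset.prod_const]
      have h2 : (∏ i ∈ F \ E, χ i (x i)) = 1 := by
        refine Finset.prod_eq_one fun i hi => ?_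
        rw [Finset.mem_sdiff] at hi
        exact (hval i (x i)).resolve_right
          (fun hv => hi.2 ((hchar E x hxE i hi.1).2 hv))
      rw [h1, h2, one_mul, hEven.neg_one_pow]
  have hdisj : (↑filt : Set (Finset ι)).PairwiseDisjoint D := by
    intro E hE E' hE' hne
    simp only [Function.onFun]
    rw [Set.disjoint_left]
    intro x hx hx'
    apply hne
    rw [Finset.mem_coe, hfiltdef, Finset.mem_filter, Finset.mem_powerset] at hE hE'
    ext i
    by_cases hiF : i ∈ F
    · rw [hchar E x hx i hiF, hchar E' x hx' i hiF]
    · constructor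
      · intro h; exact absurd (hE.1 h) hiF
      · intro h; exact absurd (hE'.1 h) hiF
  have hTEm : ∀ E i, MeasurableSet (TE E i) := by
    intro E i
    simp only [hTEdef]
    split_ifs
    exacts [(hS i).inter (hLm i), (hS i).inter (hKm i)]
  have hGSval : μ ({x : ∀ i, A i | ∏ᶠ i, χ i (x i) = 1} ∩ Set.univ.pi S)
      = ∑ E ∈ filt, (∏ i ∈ F, ν i (TE E i)) * c := by
    rw [hdecomp, measure_biUnion_finset hdisj (fun E _ =>
      MeasurableSet.univ_pi fun i => by
        split_ifs; exacts [hTEm E i, hS i])]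
    exact Finset.sum_congr rfl fun E _ => key (TE E) (hTEm E)
  have hμS : μ (Set.univ.pi S) = (∏ i ∈ F, ν i (S i)) * c := by
    have h := key S hS
    simpa only [ite_self] using h
  -- real quantities
  set a : ι → ℝ := fun i => (ν i (S i ∩ K i)).toReal with hadef2
  set b : ι → ℝ := fun i => (ν i (S i ∩ L i)).toReal with hbdef2
  have hab : ∀ i, (ν i (S i)).toReal = a i + b i := by
    intro i
    have hsplit : S i = (S i ∩ K i) ∪ (S i ∩ L i) := by
      ext y
      simp only [Set.mem_union, Set.mem_inter_iff, hKdef, hLdef, Set.mem_preimage,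
        Set.mem_singleton_iff]
      constructor
      · intro hy
        rcases hval i y with h | h
        · exact Or.inl ⟨hy, h⟩
        · exact Or.inr ⟨hy, h⟩
      · rintro (⟨hy, _⟩ | ⟨hy, _⟩) <;> exact hy
    have hd : Disjoint (S i ∩ K i) (S i ∩ L i) := by
      rw [Set.disjoint_left]
      rintro y ⟨_, hy1⟩ ⟨_, hy2⟩
      rw [hKdef] at hy1
      rw [hLdef] at hy2
      simp only [Set.mem_preimage, Set.mem_singleton_iff] at hy1 hy2
      rw [hy1] at hy2
      norm_num at hy2
    rw [hsplit, measure_union hd ((hS i).inter (hLm i)),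
      ENNReal.toReal_add (measure_ne_top _ _) (measure_ne_top _ _)]
  have hint : ∀ i, (∫ x in S i, χ i x ∂(ν i)) = a i - b i := by
    intro i
    have hrepr : ∀ y, χ i y = (K i).indicator (fun _ => (2:ℝ)) y - 1 := by
      intro y
      by_cases hy : χ i y = 1
      · rw [Set.indicator_of_mem (by simpa [hKdef] using hy), hy]
        norm_num
      · rw [Set.indicator_of_notMem (by simpa [hKdef] using hy),
          (hval i y).resolve_left hy]
        norm_num
    calc (∫ x in S i, χ i x ∂(ν i))
        = ∫ x in S i, ((K i).indicator (fun _ => (2:ℝ)) x - 1) ∂(ν i) :=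
          integral_congr_ae (Filter.Eventually.of_forall fun x => hrepr x)
      _ = (∫ x in S i, (K i).indicator (fun _ => (2:ℝ)) x ∂(ν i))
            - ∫ _x in S i, (1:ℝ) ∂(ν i) :=
          integral_sub ((integrable_const (2:ℝ)).indicator (hKm i)).integrableOn
            (integrable_const 1)
      _ = (ν i (S i ∩ K i)).toReal • (2:ℝ) - (ν i (S i)).toReal • (1:ℝ) := by
          rw [setIntegral_indicator (hKm i), setIntegral_const, setIntegral_const]; rfl
      _ = a i - b i := by
          rw [smul_eq_mul, smul_eq_mul, hab i, hadef2]
          ring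
  have hEoff : ∀ i ∉ F, (∫ x in S i, χ i x ∂(ν i)) / (ν i (S i)).toReal = 1 := by
    intro i hi
    have h1 : χ i = 1 := hnotF i hi
    have h2 : (∫ x in S i, χ i x ∂(ν i)) = (ν i (S i)).toReal := by
      rw [show (fun x => χ i x) = fun _ : A i => (1:ℝ) from funext fun x => by
        rw [h1]; rfl]
      rw [setIntegral_const, smul_eq_mul, mul_one]; rfl
    rw [h2, div_self (ENNReal.toReal_pos (hpos i).ne' (measure_ne_top _ _)).ne']
  have hfinE : (∏ᶠ i, (∫ x in S i, χ i x ∂(ν i)) / (ν i (S i)).toReal)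
      = ∏ i ∈ F, (∫ x in S i, χ i x ∂(ν i)) / (ν i (S i)).toReal := by
    refine finprod_eq_prod_of_mulSupport_subset _ fun i hi => ?_
    rw [Function.mem_mulSupport] at hi
    rw [Finset.mem_coe]
    by_contra h
    exact hi (hEoff i h)
  -- convert everything to reals
  have hGS_real : (μ ({x : ∀ i, A i | ∏ᶠ i, χ i (x i) = 1} ∩ Set.univ.pi S)).toReal
      = (∑ E ∈ filt, ((∏ i ∈ E, b i) * ∏ i ∈ F \ E, a i)) * c.toReal := by
    rw [hGSval, ENNReal.toReal_sum (fun E _ => ENNReal.mul_ne_top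
      (ENNReal.prod_lt_top fun i _ => measure_lt_top _ _).ne (measure_ne_top _ _)),
      Finset.sum_mul]
    refine Finset.sum_congr rfl fun E hE => ?_
    rw [ENNReal.toReal_mul, ENNReal.toReal_prod]
    congr 1
    have hEF : E ⊆ F := Finset.mem_powerset.1 (Finset.mem_filter.1 hE).1
    rw [← Finset.prod_sdiff hEF, mul_comm]
    congr 1
    · refine Finset.prod_congr rfl fun i hi => ?_
      rw [hTEdef]
      simp only [if_pos hi]; rfl
    · refine Finset.prod_congr rfl fun i hi => ?_
      rw [Finset.mem_sdiff] at hi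
      rw [hTEdef]
      simp only [if_neg hi.2]; rfl
  have hS_real : (μ (Set.univ.pi S)).toReal = (∏ i ∈ F, (a i + b i)) * c.toReal := by
    rw [hμS, ENNReal.toReal_mul, ENNReal.toReal_prod]
    congr 1
    exact Finset.prod_congr rfl fun i _ => hab i
  have hfinE2 : (∏ᶠ i, (∫ x in S i, χ i x ∂(ν i)) / (ν i (S i)).toReal)
      = ∏ i ∈ F, (a i - b i) / (a i + b i) := by
    rw [hfinE]
    exact Finset.prod_congr rfl fun i _ => by rw [hint i, hab i]
  -- final arithmetic
  have hne0 : ∀ i ∈ F, a i + b i ≠ 0 := fun i _ => by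
    rw [← hab i]
    exact (ENNReal.toReal_pos (hpos i).ne' (measure_ne_top _ _)).ne'
  have hkey2 : (1 + ∏ i ∈ F, (a i - b i) / (a i + b i)) * ∏ i ∈ F, (a i + b i)
      = (∏ i ∈ F, (a i + b i)) + ∏ i ∈ F, (a i - b i) := by
    rw [add_mul, one_mul, ← Finset.prod_mul_distrib]
    congr 1
    exact Finset.prod_congr rfl fun i hi => div_mul_cancel₀ _ (hne0 i hi)
  have haux := aux_even_sum F a b
  rw [hG, hGS_real, hS_real, hfinE2]
  have htr : ((1:ℝ≥0∞) / 2).toReal = 1 / 2 := by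
    rw [ENNReal.toReal_div]
    norm_num
  rw [htr, div_eq_iff (by norm_num : (1/2:ℝ) ≠ 0)]
  rw [hfiltdef]
  linear_combination (c.toReal / 2) * haux - (c.toReal / 2) * hkey2
end

section
/- In the setting of the product character-sum theorem, if S has positive measure then ν(G ∩ S)/ν(G) = 0 if and only if there exists a family of signs ε_p ∈ {±1}, almost all equal to 1, with ∏_p ε_p = −1 and χ_p = ε_p ν_p-almost everywhere on S_p for every p. -/
open MeasureTheory Filter Topology
open scoped ENNReal NNReal

private lemma sign_prod {ι : Type*} (F : Finset ι) (σ : ι → ℝ)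
    (h : ∀ i ∈ F, σ i = 1 ∨ σ i = -1) :
    (∏ i ∈ F, σ i) = 1 ∨ (∏ i ∈ F, σ i) = -1 :=
  Finset.prod_induction σ (fun x => x = 1 ∨ x = -1)
    (fun a b ha hb => by rcases ha with h1 | h1 <;> rcases hb with h2 | h2 <;>
      simp [h1, h2]) (Or.inl rfl) h

private lemma prod_factorization
    {ι : Type*} [Countable ι] [DecidableEq ι] {A : ι → Type*} [∀ i, MeasurableSpace (A i)]
    (ν : ∀ i, Measure (A i)) [∀ i, IsProbabilityMeasure (ν i)]
    (μ : Measure (∀ i, A i)) [IsProbabilityMeasure μ]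
    (hμ : ∀ T : (i : ι) → Set (A i), (∀ i, MeasurableSet (T i)) →
      {i | T i ≠ Set.univ}.Finite → μ (Set.univ.pi T) = ∏ᶠ i, ν i (T i))
    (T : ∀ i, Set (A i)) (hT : ∀ i, MeasurableSet (T i)) (F : Finset ι) :
    μ (Set.univ.pi T)
      = (∏ i ∈ F, ν i (T i)) *
        μ (Set.univ.pi fun i => if i ∈ F then (Set.univ : Set (A i)) else T i) := by
  classical
  obtain ⟨f, hf⟩ := Countable.exists_injective_nat ι
  set C : ℝ≥0∞ := ∏ i ∈ F, ν i (T i) with hC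
  have hCtop : C ≠ ∞ := (ENNReal.prod_lt_top fun i _ => measure_lt_top _ _).ne
  have hPn : ∀ n : ℕ, (f ⁻¹' Set.Iio n).Finite := fun n =>
    (Set.finite_Iio n).preimage hf.injOn
  set Tn : ℕ → ∀ i, Set (A i) :=
    (fun n i => if i ∈ F ∨ f i < n then T i else Set.univ) with hTnd
  set Tn' : ℕ → ∀ i, Set (A i) :=
    (fun n i => if i ∉ F ∧ f i < n then T i else Set.univ) with hTnd'
  have hTnm : ∀ n i, MeasurableSet (Tn n i) := by
    intro n i; simp only [hTnd]; split_ifs; exacts [hT i, MeasurableSet.univ]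
  have hTnm' : ∀ n i, MeasurableSet (Tn' n i) := by
    intro n i; simp only [hTnd']; split_ifs; exacts [hT i, MeasurableSet.univ]
  -- exact factorization at each finite stage
  have step1 : ∀ n, μ (Set.univ.pi (Tn n)) = C * μ (Set.univ.pi (Tn' n)) := by
    intro n
    set K : Finset ι := F ∪ ((hPn n).toFinset \ F) with hK
    have hdisj : Disjoint F ((hPn n).toFinset \ F) := Finset.disjoint_sdiff
    have h1 : μ (Set.univ.pi (Tn n)) = ∏ᶠ i, ν i (Tn n i) := by
      apply hμ _ (hTnm n)
      apply Set.Finite.subset K.finite_toSet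
      intro i hi
      simp only [Set.mem_setOf_eq, hTnd] at hi
      by_cases hiF : i ∈ F
      · exact Finset.mem_coe.2 (Finset.mem_union_left _ hiF)
      · have : f i < n := by
          by_contra hlt
          exact hi (if_neg (by tauto))
        exact Finset.mem_coe.2 (Finset.mem_union_right _
          (Finset.mem_sdiff.2 ⟨(hPn n).mem_toFinset.2 this, hiF⟩))
    have h2 : μ (Set.univ.pi (Tn' n)) = ∏ᶠ i, ν i (Tn' n i) := by
      apply hμ _ (hTnm' n)
      apply Set.Finite.subset ((hPn n).toFinset \ F).finite_toSet
      intro i hi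
      simp only [Set.mem_setOf_eq, hTnd'] at hi
      have hcond : i ∉ F ∧ f i < n := by
        by_contra hc
        exact hi (if_neg hc)
      exact Finset.mem_coe.2
        (Finset.mem_sdiff.2 ⟨(hPn n).mem_toFinset.2 hcond.2, hcond.1⟩)
    have h3 : (∏ᶠ i, ν i (Tn n i)) = ∏ i ∈ K, ν i (Tn n i) := by
      apply finprod_eq_prod_of_mulSupport_subset
      intro i hi
      simp only [Function.mem_mulSupport] at hi
      have hne : Tn n i ≠ Set.univ := by
        intro huniv; apply hi; rw [huniv]; exact measure_univ
      simp only [hTnd] at hne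
      by_cases hiF : i ∈ F
      · exact Finset.mem_coe.2 (Finset.mem_union_left _ hiF)
      · have : f i < n := by
          by_contra hlt
          exact hne (if_neg (by tauto))
        exact Finset.mem_coe.2 (Finset.mem_union_right _
          (Finset.mem_sdiff.2 ⟨(hPn n).mem_toFinset.2 this, hiF⟩))
    have h4 : (∏ᶠ i, ν i (Tn' n i)) = ∏ i ∈ (hPn n).toFinset \ F, ν i (Tn' n i) := by
      apply finprod_eq_prod_of_mulSupport_subset
      intro i hi
      simp only [Function.mem_mulSupport] at hi
      have hne : Tn' n i ≠ Set.univ := by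
        intro huniv; apply hi; rw [huniv]; exact measure_univ
      simp only [hTnd'] at hne
      have hcond : i ∉ F ∧ f i < n := by
        by_contra hc
        exact hne (if_neg hc)
      exact Finset.mem_coe.2
        (Finset.mem_sdiff.2 ⟨(hPn n).mem_toFinset.2 hcond.2, hcond.1⟩)
    rw [h1, h2, h3, h4, hK, Finset.prod_union hdisj]
    congr 1
    · apply Finset.prod_congr rfl
      intro i hi
      simp only [hTnd, if_pos (Or.inl hi)]
    · apply Finset.prod_congr rfl
      intro i hi
      rw [Finset.mem_sdiff] at hi
      have hlt : f i < n := (hPn n).mem_toFinset.1 hi.1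
      simp only [hTnd, hTnd', if_pos (Or.inr hlt), if_pos (And.intro hi.2 hlt)]
  -- limits
  have hmono : Antitone fun n => Set.univ.pi (Tn n) := by
    intro n m hnm
    apply Set.pi_mono
    intro i _
    simp only [hTnd]
    by_cases hcn : i ∈ F ∨ f i < n
    · rw [if_pos hcn, if_pos (hcn.imp id fun h => lt_of_lt_of_le h hnm)]
    · rw [if_neg hcn]
      exact Set.subset_univ _
  have hmono' : Antitone fun n => Set.univ.pi (Tn' n) := by
    intro n m hnm
    apply Set.pi_mono
    intro i _
    simp only [hTnd']
    by_cases hcn : i ∉ F ∧ f i < n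
    · rw [if_pos hcn, if_pos ⟨hcn.1, lt_of_lt_of_le hcn.2 hnm⟩]
    · rw [if_neg hcn]
      exact Set.subset_univ _
  have hiI : (⋂ n, Set.univ.pi (Tn n)) = Set.univ.pi T := by
    ext x
    simp only [Set.mem_iInter, Set.mem_univ_pi, hTnd]
    constructor
    · intro h i
      have := h (f i + 1) i
      rwa [if_pos (Or.inr (Nat.lt_succ_self _))] at this
    · intro h n i
      split_ifs with h'
      · exact h i
      · trivial
  have hiI' : (⋂ n, Set.univ.pi (Tn' n))
      = Set.univ.pi fun i => if i ∈ F then (Set.univ : Set (A i)) else T i := by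
    ext x
    simp only [Set.mem_iInter, Set.mem_univ_pi, hTnd']
    constructor
    · intro h i
      by_cases hiF : i ∈ F
      · rw [if_pos hiF]; trivial
      · rw [if_neg hiF]
        have := h (f i + 1) i
        rwa [if_pos ⟨hiF, Nat.lt_succ_self _⟩] at this
    · intro h n i
      split_ifs with h'
      · have := h i
        rwa [if_neg h'.1] at this
      · trivial
  have hl1 : Tendsto (fun n => μ (Set.univ.pi (Tn n))) atTop (𝓝 (μ (Set.univ.pi T))) := by
    rw [← hiI]
    exact tendsto_measure_iInter_atTop
      (fun n => (MeasurableSet.univ_pi (hTnm n)).nullMeasurableSet)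
      hmono ⟨0, measure_ne_top μ _⟩
  have hl2 : Tendsto (fun n => μ (Set.univ.pi (Tn' n))) atTop
      (𝓝 (μ (Set.univ.pi fun i => if i ∈ F then (Set.univ : Set (A i)) else T i))) := by
    rw [← hiI']
    exact tendsto_measure_iInter_atTop
      (fun n => (MeasurableSet.univ_pi (hTnm' n)).nullMeasurableSet)
      hmono' ⟨0, measure_ne_top μ _⟩
  have hl2' := ENNReal.Tendsto.const_mul hl2 (Or.inr hCtop)
  exact tendsto_nhds_unique (hl1.congr step1) hl2'

private lemma sign_combinatorics {ι : Type*} (F : Finset ι) (m : ι → ℝ → ℝ≥0∞)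
    (hne : ∀ i ∈ F, ¬(m i 1 = 0 ∧ m i (-1) = 0))
    (hL : ∀ σ : ι → ℝ, (∀ i ∈ F, σ i = 1 ∨ σ i = -1) → (∏ i ∈ F, σ i) = 1 →
      ∃ i ∈ F, m i (σ i) = 0) :
    ∃ ε : ι → ℝ, (∀ i, ε i = 1 ∨ ε i = -1) ∧ (∀ i ∉ F, ε i = 1) ∧
      (∏ i ∈ F, ε i) = -1 ∧ ∀ i ∈ F, m i (-ε i) = 0 := by
  classical
  have key : ∀ i ∈ F, m i 1 = 0 ∨ m i (-1) = 0 := by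
    intro i₀ hi₀
    by_contra hc
    push_neg at hc
    set τ : ι → ℝ := fun i => if m i 1 = 0 then -1 else 1 with hτ
    have hτv : ∀ i, τ i = 1 ∨ τ i = -1 := fun i => by
      simp only [hτ]; split_ifs <;> simp
    set P := ∏ i ∈ F.erase i₀, τ i with hPdef
    have hPv : P = 1 ∨ P = -1 := sign_prod _ _ fun i _ => hτv i
    set σ : ι → ℝ := fun i => if i = i₀ then P else τ i with hσ
    have hσv : ∀ i ∈ F, σ i = 1 ∨ σ i = -1 := by
      intro i _; simp only [hσ]; split_ifs; exacts [hPv, hτv i]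
    have hσp : (∏ i ∈ F, σ i) = 1 := by
      rw [← Finset.mul_prod_erase F σ hi₀]
      have h1 : σ i₀ = P := by simp [hσ]
      have h2 : (∏ i ∈ F.erase i₀, σ i) = P := by
        rw [hPdef]
        exact Finset.prod_congr rfl fun i hi => by
          simp [hσ, Finset.ne_of_mem_erase hi]
      rw [h1, h2]
      rcases hPv with h | h <;> rw [h] <;> norm_num
    obtain ⟨i, hiF, h0⟩ := hL σ hσv hσp
    by_cases hii : i = i₀
    · subst hii
      have hσi : σ i = P := by simp [hσ]
      rw [hσi] at h0
      rcases hPv with h | h <;> rw [h] at h0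
      exacts [hc.1 h0, hc.2 h0]
    · have hσi : σ i = τ i := by simp [hσ, hii]
      rw [hσi] at h0
      simp only [hτ] at h0
      split_ifs at h0 with h
      · exact hne i hiF ⟨h, h0⟩
      · exact h h0
  set ε : ι → ℝ := fun i => if i ∈ F then (if m i (-1) = 0 then 1 else -1) else 1 with hεd
  have hβ : ∀ i, ε i = if i ∈ F then (if m i (-1) = 0 then 1 else -1) else 1 := fun i => rfl
  have hεv : ∀ i, ε i = 1 ∨ ε i = -1 := by
    intro i; rw [hβ i]; split_ifs <;> simp
  refine ⟨ε, hεv, ?_, ?_, ?_⟩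
  · intro i hi; rw [hβ i, if_neg hi]
  · rcases sign_prod F ε (fun i _ => hεv i) with h | h
    · exfalso
      obtain ⟨i, hiF, h0⟩ := hL ε (fun i _ => hεv i) h
      rw [hβ i, if_pos hiF] at h0
      split_ifs at h0 with hmi
      · exact hne i hiF ⟨h0, hmi⟩
      · exact hmi h0
    · exact h
  · intro i hiF
    rw [hβ i, if_pos hiF]
    split_ifs with hmi
    · simpa using hmi
    · rcases key i hiF with h | h
      · simpa using h
      · exact absurd h hmi

/-- Vanishing criterion for the density in the product character-sum theorem:
`μ(G ∩ S)/μ(G) = 0` iff there are signs `ε p ∈ {±1}`, almost all `1`, with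
`∏ p, ε p = -1` and `χ p = ε p` almost everywhere on `S p` for every `p`. -/
theorem character_sum_density_vanishing_iff
    {ι : Type*} [Countable ι] {A : ι → Type*} [∀ i, Group (A i)]
    [∀ i, TopologicalSpace (A i)] [∀ i, IsTopologicalGroup (A i)] [∀ i, CompactSpace (A i)]
    [∀ i, MeasurableSpace (A i)] [∀ i, BorelSpace (A i)]
    (ν : ∀ i, Measure (A i)) [∀ i, (ν i).IsHaarMeasure] [∀ i, IsProbabilityMeasure (ν i)]
    (μ : Measure (∀ i, A i)) [μ.IsHaarMeasure] [IsProbabilityMeasure μ]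
    (hμ : ∀ T : (i : ι) → Set (A i), (∀ i, MeasurableSet (T i)) →
      {i | T i ≠ Set.univ}.Finite → μ (Set.univ.pi T) = ∏ᶠ i, ν i (T i))
    (χ : ∀ i, A i →* ℝ) (hχc : ∀ i, Continuous (χ i))
    (hval : ∀ i a, χ i a = 1 ∨ χ i a = -1)
    (hfin : {i | χ i ≠ 1}.Finite) (hnt : ∃ i, χ i ≠ 1)
    (S : ∀ i, Set (A i)) (hS : ∀ i, MeasurableSet (S i)) (hpos : ∀ i, 0 < ν i (S i))
    (hSpos : 0 < μ (Set.univ.pi S)) :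
    (μ ({x : ∀ i, A i | ∏ᶠ i, χ i (x i) = 1} ∩ Set.univ.pi S)).toReal
        / (μ {x : ∀ i, A i | ∏ᶠ i, χ i (x i) = 1}).toReal = 0
      ↔ ∃ ε : ι → ℝ, (∀ i, ε i = 1 ∨ ε i = -1) ∧ {i | ε i ≠ 1}.Finite ∧
          (∏ᶠ i, ε i) = -1 ∧
          ∀ i, ∀ᵐ x ∂((ν i).restrict (S i)), χ i x = ε i := by
  classical
  set F : Finset ι := hfin.toFinset with hF
  have hg_eq : ∀ x : ∀ i, A i, (∏ᶠ i, χ i (x i)) = ∏ i ∈ F, χ i (x i) := by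
    intro x
    apply finprod_eq_prod_of_mulSupport_subset
    intro i hi
    simp only [Function.mem_mulSupport] at hi
    rw [hF, Finset.mem_coe, Set.Finite.mem_toFinset]
    intro hc
    exact hi (by rw [hc]; rfl)
  set G := {x : ∀ i, A i | (∏ᶠ i, χ i (x i)) = 1} with hG
  have hgm : Measurable fun x : ∀ i, A i => ∏ i ∈ F, χ i (x i) :=
    Finset.measurable_prod _ fun i _ => (hχc i).measurable.comp (measurable_pi_apply i)
  have hGset : G = (fun x : ∀ i, A i => ∏ i ∈ F, χ i (x i)) ⁻¹' {1} := by
    ext x; simp [hG, hg_eq x]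
  have hGmeas : MeasurableSet G := by
    rw [hGset]; exact hgm (measurableSet_singleton 1)
  -- μ G ≠ 0
  obtain ⟨i₀, hi₀⟩ := hnt
  have hi₀F : i₀ ∈ F := hfin.mem_toFinset.2 hi₀
  obtain ⟨b, hb⟩ := DFunLike.ne_iff.1 hi₀
  simp only [MonoidHom.one_apply] at hb
  have hb' : χ i₀ b = -1 := (hval i₀ b).resolve_left hb
  set a : ∀ i, A i := Function.update (fun i => (1 : A i)) i₀ b with ha
  have hga : (∏ i ∈ F, χ i (a i)) = -1 := by
    rw [Finset.prod_eq_single i₀]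
    · rw [ha]; simp [hb']
    · intro i _ hne
      rw [ha]; simp [Function.update_of_ne hne]
    · intro h; exact absurd hi₀F h
  have hneg_eq : (fun x : ∀ i, A i => a * x) ⁻¹' G
      = {x : ∀ i, A i | (∏ i ∈ F, χ i (x i)) = -1} := by
    ext x
    simp only [Set.mem_preimage, hG, Set.mem_setOf_eq, hg_eq]
    have hmul : (∏ i ∈ F, χ i ((a * x) i))
        = (∏ i ∈ F, χ i (a i)) * ∏ i ∈ F, χ i (x i) := by
      rw [← Finset.prod_mul_distrib]
      exact Finset.prod_congr rfl fun i _ => by simp [Pi.mul_apply, map_mul]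
    rw [hmul, hga]
    constructor <;> intro h <;> nlinarith [h]
  have hmu_neg : μ {x : ∀ i, A i | (∏ i ∈ F, χ i (x i)) = -1} = μ G := by
    rw [← hneg_eq]; exact measure_preimage_mul μ a G
  have hmeas2 : MeasurableSet {x : ∀ i, A i | (∏ i ∈ F, χ i (x i)) = -1} := by
    have hpre : {x : ∀ i, A i | (∏ i ∈ F, χ i (x i)) = -1}
        = (fun x : ∀ i, A i => ∏ i ∈ F, χ i (x i)) ⁻¹' {-1} := rfl
    rw [hpre]
    exact hgm (measurableSet_singleton (-1))
  have hdis : Disjoint G {x : ∀ i, A i | (∏ i ∈ F, χ i (x i)) = -1} := by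
    rw [Set.disjoint_left]
    intro x hx hx'
    rw [hG, Set.mem_setOf_eq, hg_eq] at hx
    rw [Set.mem_setOf_eq] at hx'
    rw [hx] at hx'
    norm_num at hx'
  have huniv : G ∪ {x : ∀ i, A i | (∏ i ∈ F, χ i (x i)) = -1} = Set.univ := by
    ext x
    simp only [Set.mem_union, hG, Set.mem_setOf_eq, Set.mem_univ, iff_true, hg_eq]
    exact sign_prod F _ fun i _ => hval i (x i)
  have hsplit : μ G + μ G = 1 := by
    nth_rewrite 2 [← hmu_neg]
    rw [← measure_union hdis hmeas2, huniv, measure_univ]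
  have hGne : μ G ≠ 0 := by
    intro h0
    rw [h0, add_zero] at hsplit
    exact zero_ne_one hsplit
  -- reduce to vanishing of the numerator
  have hlhs : ((μ (G ∩ Set.univ.pi S)).toReal / (μ G).toReal = 0)
      ↔ μ (G ∩ Set.univ.pi S) = 0 := by
    rw [div_eq_zero_iff]
    constructor
    · rintro (h | h)
      · rw [ENNReal.toReal_eq_zero_iff] at h
        exact h.resolve_right (measure_ne_top μ _)
      · exact absurd h (ENNReal.toReal_ne_zero.2 ⟨hGne, measure_ne_top μ G⟩)
    · intro h; left; simp [h]
  -- pieces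
  set m : ι → ℝ → ℝ≥0∞ := fun i t => ν i (S i ∩ (χ i) ⁻¹' {t}) with hm
  set Tpc : (ι → ℝ) → ∀ i, Set (A i) :=
    (fun σ i => if i ∈ F then S i ∩ (χ i) ⁻¹' {σ i} else S i) with hTpc
  have hTpcm : ∀ σ i, MeasurableSet (Tpc σ i) := by
    intro σ i
    simp only [hTpc]
    split_ifs
    · exact (hS i).inter ((hχc i).measurable (measurableSet_singleton _))
    · exact hS i
  have hfactS := prod_factorization ν μ hμ S hS F
  have hcne : μ (Set.univ.pi fun i => if i ∈ F then (Set.univ : Set (A i)) else S i) ≠ 0 := by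
    intro h
    rw [hfactS, h, mul_zero] at hSpos
    exact lt_irrefl 0 hSpos
  have hpiece : ∀ σ : ι → ℝ, μ (Set.univ.pi (Tpc σ))
      = (∏ i ∈ F, m i (σ i)) *
        μ (Set.univ.pi fun i => if i ∈ F then (Set.univ : Set (A i)) else S i) := by
    intro σ
    rw [prod_factorization ν μ hμ (Tpc σ) (hTpcm σ) F]
    congr 1
    · apply Finset.prod_congr rfl
      intro i hi
      simp only [hTpc, if_pos hi, hm]
    · have hfix : (fun i => if i ∈ F then (Set.univ : Set (A i)) else Tpc σ i)
          = fun i => if i ∈ F then (Set.univ : Set (A i)) else S i := by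
        funext i
        by_cases h : i ∈ F <;> simp [hTpc, h]
      rw [hfix]
  have hmne : ∀ i ∈ F, ¬(m i 1 = 0 ∧ m i (-1) = 0) := by
    rintro i _ ⟨h1, h2⟩
    have hle : ν i (S i) ≤ m i 1 + m i (-1) := by
      refine le_trans (measure_mono ?_) (measure_union_le _ _)
      intro x hx
      rcases hval i x with h | h
      · exact Or.inl ⟨hx, h⟩
      · exact Or.inr ⟨hx, h⟩
    rw [h1, h2, add_zero] at hle
    exact absurd (le_antisymm hle zero_le) (hpos i).ne'
  -- step 1 : null numerator → combinatorial condition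
  have h1 : μ (G ∩ Set.univ.pi S) = 0 →
      ∀ σ : ι → ℝ, (∀ i ∈ F, σ i = 1 ∨ σ i = -1) → (∏ i ∈ F, σ i) = 1 →
        ∃ i ∈ F, m i (σ i) = 0 := by
    intro hnull σ hσv hσp
    have hsub : Set.univ.pi (Tpc σ) ⊆ G ∩ Set.univ.pi S := by
      intro x hx
      constructor
      · show (∏ᶠ i, χ i (x i)) = 1
        rw [hg_eq, ← hσp]
        apply Finset.prod_congr rfl
        intro i hi
        have hxi := hx i (Set.mem_univ i)
        simp only [hTpc, if_pos hi] at hxi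
        exact hxi.2
      · intro i _
        have hxi := hx i (Set.mem_univ i)
        simp only [hTpc] at hxi
        split_ifs at hxi with h
        · exact hxi.1
        · exact hxi
    have h0 : μ (Set.univ.pi (Tpc σ)) = 0 := measure_mono_null hsub hnull
    rw [hpiece σ] at h0
    rcases mul_eq_zero.1 h0 with h | h
    · exact Finset.prod_eq_zero_iff.1 h
    · exact absurd h hcne
  -- step 3 : sign family → null numerator
  have h3 : (∃ ε : ι → ℝ, (∀ i, ε i = 1 ∨ ε i = -1) ∧ (∀ i ∉ F, ε i = 1) ∧
      (∏ i ∈ F, ε i) = -1 ∧ ∀ i ∈ F, m i (-ε i) = 0) →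
      μ (G ∩ Set.univ.pi S) = 0 := by
    rintro ⟨ε, hεv, hεoff, hεp, hεm⟩
    have hcover : G ∩ Set.univ.pi S ⊆
        ⋃ s ∈ F.powerset, (G ∩ Set.univ.pi (Tpc fun i => if i ∈ s then -1 else 1)) := by
      rintro x ⟨hxG, hxS⟩
      apply Set.mem_biUnion
        (Finset.mem_powerset.2 (Finset.filter_subset (fun i => χ i (x i) = -1) F))
      refine ⟨hxG, ?_⟩
      intro i _
      simp only [hTpc]
      by_cases hiF : i ∈ F
      · rw [if_pos hiF]
        refine ⟨hxS i (Set.mem_univ i), ?_⟩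
        simp only [Set.mem_preimage, Set.mem_singleton_iff]
        by_cases hneg : χ i (x i) = -1
        · rw [if_pos (Finset.mem_filter.2 ⟨hiF, hneg⟩)]
          exact hneg
        · rw [if_neg (show ¬ i ∈ F.filter (fun j => χ j (x j) = -1) from
            fun hmem => hneg (Finset.mem_filter.1 hmem).2)]
          exact (hval i (x i)).resolve_right hneg
      · rw [if_neg hiF]
        exact hxS i (Set.mem_univ i)
    refine le_antisymm ?_ zero_le
    calc μ (G ∩ Set.univ.pi S)
        ≤ ∑ s ∈ F.powerset, μ (G ∩ Set.univ.pi (Tpc fun i => if i ∈ s then -1 else 1)) :=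
          (measure_mono hcover).trans (measure_biUnion_finset_le _ _)
      _ = 0 := by
          apply Finset.sum_eq_zero
          intro s _
          set σ : ι → ℝ := fun i => if i ∈ s then -1 else 1 with hσd
          rcases Set.eq_empty_or_nonempty (G ∩ Set.univ.pi (Tpc σ)) with he | hne'
          · rw [he]; exact measure_empty
          · obtain ⟨x₀, hx₀G, hx₀S⟩ := hne'
            have hσp : (∏ i ∈ F, σ i) = 1 := by
              have hcg : (∏ i ∈ F, σ i) = ∏ i ∈ F, χ i (x₀ i) := by
                apply Finset.prod_congr rfl
                intro i hi
                have hxi := hx₀S i (Set.mem_univ i)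
                simp only [hTpc, if_pos hi] at hxi
                exact hxi.2.symm
              rw [hcg, ← hg_eq]
              exact hx₀G
            have hex : ∃ i ∈ F, σ i ≠ ε i := by
              by_contra hcon
              push_neg at hcon
              rw [Finset.prod_congr rfl hcon, hεp] at hσp
              norm_num at hσp
            obtain ⟨i, hiF, hnei⟩ := hex
            have hσvi : σ i = 1 ∨ σ i = -1 := by
              simp only [hσd]; split_ifs <;> simp
            have hσi : σ i = -ε i := by
              rcases hεv i with h | h <;> rcases hσvi with h' | h' <;>
                simp_all
            have hm0 : m i (σ i) = 0 := by
              rw [hσi]; exact hεm i hiF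
            have hμ0 : μ (Set.univ.pi (Tpc σ)) = 0 := by
              rw [hpiece σ, Finset.prod_eq_zero hiF hm0, zero_mul]
            exact measure_mono_null Set.inter_subset_right hμ0
  -- step 4 : translation between the two forms of the sign family
  have h4 : (∃ ε : ι → ℝ, (∀ i, ε i = 1 ∨ ε i = -1) ∧ (∀ i ∉ F, ε i = 1) ∧
      (∏ i ∈ F, ε i) = -1 ∧ ∀ i ∈ F, m i (-ε i) = 0) ↔
      (∃ ε : ι → ℝ, (∀ i, ε i = 1 ∨ ε i = -1) ∧ {i | ε i ≠ 1}.Finite ∧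
        (∏ᶠ i, ε i) = -1 ∧ ∀ i, ∀ᵐ x ∂((ν i).restrict (S i)), χ i x = ε i) := by
    have hmeas : ∀ (i : ι) (t : ℝ), MeasurableSet {x : A i | ¬χ i x = t} := by
      intro i t
      have : {x : A i | ¬χ i x = t} = (χ i) ⁻¹' ({t}ᶜ) := rfl
      rw [this]
      exact (hχc i).measurable (measurableSet_singleton t).compl
    constructor
    · rintro ⟨ε, hεv, hεoff, hεp, hεm⟩
      have hsupp : Function.mulSupport ε ⊆ ↑F := by
        intro i hi
        rw [Function.mem_mulSupport] at hi
        by_contra hiF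
        exact hi (hεoff i hiF)
      refine ⟨ε, hεv, ?_, ?_, ?_⟩
      · exact Set.Finite.subset F.finite_toSet hsupp
      · rw [finprod_eq_prod_of_mulSupport_subset ε hsupp]
        exact hεp
      · intro i
        rw [ae_iff, Measure.restrict_apply (hmeas i (ε i))]
        by_cases hiF : i ∈ F
        · apply measure_mono_null (t := S i ∩ (χ i) ⁻¹' {-ε i})
          · rintro x ⟨hne, hxS⟩
            have hne' : ¬χ i x = ε i := hne
            refine ⟨hxS, ?_⟩
            simp only [Set.mem_preimage, Set.mem_singleton_iff]
            rcases hval i x with h | h <;> rcases hεv i with h' | h' <;>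
              (revert hne'; norm_num [h, h'])
          · exact hεm i hiF
        · have hχ1 : χ i = 1 := not_not.1 fun h => hiF (hfin.mem_toFinset.2 h)
          have hempty : {x : A i | ¬χ i x = ε i} = ∅ := by
            ext x
            simp [hχ1, hεoff i hiF]
          rw [hempty, Set.empty_inter, measure_empty]
    · rintro ⟨ε, hεv, hεfin, hεp, hεae⟩
      have hεoff : ∀ i ∉ F, ε i = 1 := by
        intro i hiF
        by_contra hne
        have hεi : ε i = -1 := (hεv i).resolve_left hne
        have hχ1 : χ i = 1 := not_not.1 fun h => hiF (hfin.mem_toFinset.2 h)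
        have hae := hεae i
        rw [ae_iff, Measure.restrict_apply (hmeas i (ε i))] at hae
        have huniv : {x : A i | ¬χ i x = ε i} = Set.univ := by
          ext x
          simp only [Set.mem_setOf_eq, Set.mem_univ, iff_true, hχ1, hεi,
            MonoidHom.one_apply]
          norm_num
        rw [huniv, Set.univ_inter] at hae
        exact absurd hae (hpos i).ne'
      have hsupp : Function.mulSupport ε ⊆ ↑F := by
        intro i hi
        rw [Function.mem_mulSupport] at hi
        by_contra hiF
        exact hi (hεoff i hiF)
      refine ⟨ε, hεv, hεoff, ?_, ?_⟩
      · rw [← finprod_eq_prod_of_mulSupport_subset ε hsupp]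
        exact hεp
      · intro i hiF
        have hae := hεae i
        rw [ae_iff, Measure.restrict_apply (hmeas i (ε i))] at hae
        apply measure_mono_null ?_ hae
        rintro x ⟨hxS, hx⟩
        have hx' : χ i x = -ε i := hx
        refine ⟨?_, hxS⟩
        show ¬χ i x = ε i
        rw [hx']
        rcases hεv i with h | h <;> rw [h] <;> norm_num
  rw [hlhs]
  constructor
  · intro h
    exact h4.1 (sign_combinatorics F m hmne (h1 h))
  · intro h
    exact h3 (h4.2 h)
end

section
/- Let r ∈ ℚ* with r ≠ ±1. Then the subgroup {x ∈ ℚ* : x^k ∈ ⟨r⟩ for some k ≥ 1} of ℚ* is equal to ⟨r₀⟩ × ⟨−1⟩ for some rational number r₀ ∉ {0, 1, −1}, and r₀ is uniquely determined up to sign and inversion. -/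
open Subgroup

section helpers

/-- valuation of a unit, as convenient abbreviation -/
private noncomputable def uval (p : ℕ) (x : ℚˣ) : ℤ := padicValRat p (x : ℚ)

private lemma uval_mul (p : ℕ) [Fact p.Prime] (x y : ℚˣ) :
    uval p (x * y) = uval p x + uval p y := by
  simpa [uval] using padicValRat.mul (p := p) x.ne_zero y.ne_zero

private lemma uval_one (p : ℕ) : uval p 1 = 0 := by simp [uval]

private lemma uval_neg (p : ℕ) (x : ℚˣ) : uval p (-x) = uval p x := by
  simp [uval]

private lemma uval_inv (p : ℕ) [Fact p.Prime] (x : ℚˣ) : uval p x⁻¹ = -uval p x := by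
  simpa [uval] using padicValRat.inv (p := p) (x : ℚ)

private lemma uval_pow (p : ℕ) [Fact p.Prime] (x : ℚˣ) (k : ℕ) :
    uval p (x ^ k) = k * uval p x := by
  simpa [uval] using padicValRat.pow (p := p) x.ne_zero (k := k)

private lemma uval_zpow (p : ℕ) [Fact p.Prime] (x : ℚˣ) (n : ℤ) :
    uval p (x ^ n) = n * uval p x := by
  cases n with
  | ofNat k => rw [Int.ofNat_eq_natCast, zpow_natCast, uval_pow]
  | negSucc k =>
      rw [zpow_negSucc, uval_inv, uval_pow, Int.negSucc_eq]
      push_cast; ring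

private lemma units_eq_one_or_neg_one {x : ℚˣ} {k : ℕ} (hk : k ≠ 0) (h : x ^ k = 1) :
    x = 1 ∨ x = -1 := by
  have h' : (x : ℚ) ^ k = 1 := by rw [← Units.val_pow_eq_pow_val, h, Units.val_one]
  rcases (pow_eq_one_iff_of_ne_zero hk).1 h' with h1 | ⟨h1, _⟩
  · exact Or.inl (Units.ext h1)
  · exact Or.inr (Units.ext (by simpa using h1))

/-- The subgroup of rationals a positive power of which lies in `⟨r⟩`. -/
private def radSubgroup (r : ℚˣ) : Subgroup ℚˣ where
  carrier := {x | ∃ k : ℕ, 0 < k ∧ x ^ k ∈ Subgroup.zpowers r}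
  one_mem' := ⟨1, one_pos, by rw [one_pow]; exact one_mem _⟩
  mul_mem' := by
    rintro x y ⟨k, hk, hx⟩ ⟨l, hl, hy⟩
    refine ⟨k * l, Nat.mul_pos hk hl, ?_⟩
    have : (x * y) ^ (k * l) = (x ^ k) ^ l * (y ^ l) ^ k := by
      rw [mul_pow, ← pow_mul, ← pow_mul, mul_comm l k]
    rw [this]
    exact mul_mem (pow_mem hx l) (pow_mem hy k)
  inv_mem' := by
    rintro x ⟨k, hk, hx⟩
    exact ⟨k, hk, by rw [inv_pow]; exact inv_mem hx⟩

private lemma mem_radSubgroup_iff {r x : ℚˣ} :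
    x ∈ radSubgroup r ↔ ∃ k : ℕ, 0 < k ∧ x ^ k ∈ Subgroup.zpowers r := Iff.rfl

/-- description of the closure of `{a, -1}` -/
private lemma memClosurePairQ {a x : ℚˣ} :
    x ∈ Subgroup.closure ({a, -1} : Set ℚˣ) ↔ ∃ n : ℤ, x = a ^ n ∨ x = -a ^ n := by
  constructor
  · intro hx
    let S : Subgroup ℚˣ :=
      { carrier := {x | ∃ n : ℤ, x = a ^ n ∨ x = -a ^ n}
        one_mem' := ⟨0, Or.inl (zpow_zero a).symm⟩
        mul_mem' := by
          rintro x y ⟨m, hm | hm⟩ ⟨n, hn | hn⟩ <;> subst hm <;> subst hn <;>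
            refine ⟨m + n, ?_⟩ <;>
            simp [zpow_add, neg_mul, mul_neg, neg_mul_neg]
        inv_mem' := by
          rintro x ⟨m, hm | hm⟩ <;> subst hm <;> refine ⟨-m, ?_⟩
          · exact Or.inl (by rw [zpow_neg])
          · exact Or.inr (by rw [zpow_neg, inv_neg]) }
    have hle : Subgroup.closure ({a, -1} : Set ℚˣ) ≤ S := by
      rw [Subgroup.closure_le]
      rintro y (rfl | rfl)
      · exact ⟨1, Or.inl (zpow_one _).symm⟩
      · exact ⟨0, Or.inr (by rw [zpow_zero])⟩
    exact hle hx
  · rintro ⟨n, rfl | rfl⟩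
    · exact zpow_mem (Subgroup.subset_closure (by simp)) n
    · have ha : a ∈ Subgroup.closure ({a, -1} : Set ℚˣ) := Subgroup.subset_closure (by simp)
      have hneg : (-1 : ℚˣ) ∈ Subgroup.closure ({a, -1} : Set ℚˣ) :=
        Subgroup.subset_closure (by simp)
      have := mul_mem hneg (zpow_mem ha n)
      simpa [neg_mul] using this

end helpers

/-- For `r ∈ ℚ*`, `r ≠ ±1`, the group of rationals a positive power of which lies in `⟨r⟩`
is `⟨r₀⟩ × ⟨-1⟩` for some `r₀ ≠ 0, ±1`, and `r₀` is unique up to sign and inversion. -/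
theorem exists_r0_generating_rational_radicals (r : ℚˣ) (h1 : r ≠ 1) (h2 : r ≠ -1) :
    ∃ r₀ : ℚˣ, r₀ ≠ 1 ∧ r₀ ≠ -1 ∧
      (∀ x : ℚˣ, (∃ k : ℕ, 0 < k ∧ x ^ k ∈ Subgroup.zpowers r) ↔
        x ∈ Subgroup.closure ({r₀, -1} : Set ℚˣ)) ∧
      ∀ r₁ : ℚˣ, r₁ ≠ 1 → r₁ ≠ -1 →
        (∀ x : ℚˣ, (∃ k : ℕ, 0 < k ∧ x ^ k ∈ Subgroup.zpowers r) ↔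
          x ∈ Subgroup.closure ({r₁, -1} : Set ℚˣ)) →
        r₁ = r₀ ∨ r₁ = r₀⁻¹ ∨ r₁ = -r₀ ∨ r₁ = -r₀⁻¹ := by
  classical
  -- find a prime where the valuation of r is nonzero
  obtain ⟨p, pp, hpval⟩ : ∃ p : ℕ, p.Prime ∧ padicValRat p (r : ℚ) ≠ 0 := by
    set a := (r : ℚ).num.natAbs with ha_def
    set b := (r : ℚ).den with hb_def
    have ha : a ≠ 0 := by
      simpa [ha_def, Int.natAbs_ne_zero, Rat.num_ne_zero] using r.ne_zero
    have hb : b ≠ 0 := (r : ℚ).den_nz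
    have hab : a ≠ b := by
      intro h
      have hcop : Nat.Coprime a b := (r : ℚ).reduced
      rw [h] at hcop
      have hb1 : b = 1 := by simpa [Nat.Coprime, Nat.gcd_self] using hcop
      have hnum : (r : ℚ).num = 1 ∨ (r : ℚ).num = -1 := by
        have : (r : ℚ).num.natAbs = 1 := by rw [ha_def] at h; omega
        rcases Int.natAbs_eq ((r : ℚ).num) with h' | h' <;> omega
      have hden : (r : ℚ).den = 1 := hb1
      rcases hnum with hnum | hnum
      · exact h1 (Units.ext (by rw [← Rat.num_div_den (r : ℚ), hnum, hden]; norm_num))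
      · exact h2 (Units.ext (by rw [← Rat.num_div_den (r : ℚ), hnum, hden]; norm_num))
    by_contra hcon
    push_neg at hcon
    apply hab
    rw [Nat.eq_iff_prime_padicValNat_eq a b ha hb]
    intro q hq
    have := hcon q hq
    rw [padicValRat_def, sub_eq_zero] at this
    have : (padicValNat q a : ℤ) = padicValNat q b := this
    exact_mod_cast this
  haveI : Fact p.Prime := ⟨pp⟩
  set D := uval p r with hD_def
  have hD : D ≠ 0 := hpval
  -- key: valuation equation for members of the radical subgroup
  have key : ∀ x : ℚˣ, x ∈ radSubgroup r → ∀ k : ℕ, ∀ m : ℤ, 0 < k → x ^ k = r ^ m →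
      (k : ℤ) * uval p x = m * D := by
    intro x _ k m hk hxk
    have := congrArg (uval p) hxk
    rwa [show x ^ k = x ^ (k : ℤ) by norm_cast, uval_zpow, uval_zpow] at this
  -- if a member has valuation zero, it is ±1
  have val_zero : ∀ x : ℚˣ, x ∈ radSubgroup r → uval p x = 0 → x = 1 ∨ x = -1 := by
    rintro x ⟨k, hk, hxk⟩ hv
    obtain ⟨m, hm⟩ := Subgroup.mem_zpowers_iff.1 hxk
    have h0 : (k : ℤ) * uval p x = m * D := key x ⟨k, hk, hxk⟩ k m hk hm.symm
    rw [hv, mul_zero] at h0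
    have hm0 : m = 0 := by
      rcases mul_eq_zero.1 h0.symm with h | h
      · exact h
      · exact absurd h hD
    rw [hm0, zpow_zero] at hm
    exact units_eq_one_or_neg_one hk.ne' hm.symm
  -- the valuation image is a subgroup of ℤ
  let H : AddSubgroup ℤ :=
    { carrier := {n | ∃ x : ℚˣ, x ∈ radSubgroup r ∧ uval p x = n}
      zero_mem' := ⟨1, one_mem _, uval_one p⟩
      add_mem' := by
        rintro m n ⟨x, hx, rfl⟩ ⟨y, hy, rfl⟩
        exact ⟨x * y, mul_mem hx hy, uval_mul p x y⟩
      neg_mem' := by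
        rintro n ⟨x, hx, rfl⟩
        exact ⟨x⁻¹, inv_mem hx, uval_inv p x⟩ }
  obtain ⟨g, hg⟩ := Int.subgroup_cyclic H
  have hrR : r ∈ radSubgroup r := ⟨1, one_pos, by simpa using Subgroup.mem_zpowers r⟩
  have hDH : D ∈ H := ⟨r, hrR, rfl⟩
  have hgH : g ∈ H := by
    rw [hg]; exact AddSubgroup.subset_closure rfl
  obtain ⟨x₀, hx₀R, hx₀v⟩ := hgH
  have hg0 : g ≠ 0 := by
    intro h
    rw [hg, h] at hDH
    rw [AddSubgroup.mem_closure_singleton] at hDH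
    obtain ⟨n, hn⟩ := hDH
    simp at hn
    exact hD hn.symm
  -- every member of the radical subgroup is ± a power of x₀
  have decomp : ∀ x : ℚˣ, x ∈ radSubgroup r → ∃ n : ℤ, x = x₀ ^ n ∨ x = -x₀ ^ n := by
    intro x hx
    have hvH : uval p x ∈ H := ⟨x, hx, rfl⟩
    rw [hg, AddSubgroup.mem_closure_singleton] at hvH
    obtain ⟨n, hn⟩ := hvH
    simp only [smul_eq_mul] at hn
    have hy : x * (x₀ ^ n)⁻¹ ∈ radSubgroup r := mul_mem hx (inv_mem (zpow_mem hx₀R n))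
    have hyv : uval p (x * (x₀ ^ n)⁻¹) = 0 := by
      rw [uval_mul, uval_inv, uval_zpow, hx₀v]
      omega
    rcases val_zero _ hy hyv with h | h
    · exact ⟨n, Or.inl (mul_inv_eq_one.1 h)⟩
    · refine ⟨n, Or.inr ?_⟩
      rw [mul_inv_eq_iff_eq_mul] at h
      rwa [neg_one_mul] at h
  have hx₀1 : x₀ ≠ 1 := by
    intro h; rw [h, uval_one] at hx₀v; exact hg0 hx₀v.symm
  have hx₀n1 : x₀ ≠ -1 := by
    intro h
    rw [h] at hx₀v
    rw [show (-1 : ℚˣ) = -(1 : ℚˣ) by rfl, uval_neg, uval_one] at hx₀v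
    exact hg0 hx₀v.symm
  -- the main characterization
  have main : ∀ x : ℚˣ, (∃ k : ℕ, 0 < k ∧ x ^ k ∈ Subgroup.zpowers r) ↔
      x ∈ Subgroup.closure ({x₀, -1} : Set ℚˣ) := by
    intro x
    constructor
    · intro hx
      obtain ⟨n, hn⟩ := decomp x hx
      exact memClosurePairQ.2 ⟨n, hn⟩
    · intro hx
      obtain ⟨n, hn | hn⟩ := memClosurePairQ.1 hx
      · rw [hn]; exact zpow_mem hx₀R n
      · rw [hn]
        have : (-x₀ ^ n : ℚˣ) = (-1) * x₀ ^ n := by rw [neg_mul, one_mul]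
        rw [this]
        have hneg : (-1 : ℚˣ) ∈ radSubgroup r :=
          ⟨2, two_pos, by rw [show ((-1 : ℚˣ)) ^ 2 = 1 from neg_one_sq]; exact one_mem _⟩
        exact mul_mem hneg (zpow_mem hx₀R n)
  refine ⟨x₀, hx₀1, hx₀n1, main, ?_⟩
  -- uniqueness
  intro r₁ hr₁1 hr₁n1 hiff
  have hr₁R : r₁ ∈ radSubgroup r := by
    rw [mem_radSubgroup_iff, hiff]
    exact Subgroup.subset_closure (by simp)
  obtain ⟨n, hn⟩ := decomp r₁ hr₁R
  have hx₀c : x₀ ∈ Subgroup.closure ({r₁, -1} : Set ℚˣ) := by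
    rw [← hiff]
    exact mem_radSubgroup_iff.1 hx₀R
  obtain ⟨m, hm⟩ := memClosurePairQ.1 hx₀c
  -- compute: x₀ = ± r₁ ^ m = ± x₀ ^ (n*m)
  have hval : g = n * m * g := by
    have h1 : uval p r₁ = n * g := by
      rcases hn with hn | hn <;> rw [hn]
      · rw [uval_zpow, hx₀v]
      · rw [uval_neg, uval_zpow, hx₀v]
    have h2 : uval p x₀ = m * uval p r₁ := by
      rcases hm with hm | hm <;> rw [hm]
      · rw [uval_zpow]
      · rw [uval_neg, uval_zpow]
    rw [hx₀v, h1] at h2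
    exact h2.trans (by ring)
  have hnm : n * m = 1 := by
    have : (n * m - 1) * g = 0 := by linarith [hval]
    rcases mul_eq_zero.1 this with h | h
    · omega
    · exact absurd h hg0
  rcases Int.mul_eq_one_iff_eq_one_or_neg_one.1 hnm with ⟨hn1, hm1⟩ | ⟨hn1, hm1⟩
  · rw [hn1] at hn
    rcases hn with hn | hn
    · left; rw [hn, zpow_one]
    · right; right; left; rw [hn, zpow_one]
  · rw [hn1] at hn
    rcases hn with hn | hn
    · right; left; rw [hn, zpow_neg, zpow_one]
    · right; right; right; rw [hn, zpow_neg, zpow_one]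
end

section
/- Let r ∈ ℚ*, r ≠ 0, ±1, and let P = p^k be a prime power. Write r = ±r₀^e as above and let R_P = {x ∈ ℚ̄* : x^P ∈ ⟨r⟩}. Then the cyclic group C_P = R_P/(μ_P·(R_P ∩ ℚ*)) has order P/gcd(P,e), unless r = −r₀^e with −r a square and P > 1 a 2-power dividing e, in which case C_P has order 2. -/
noncomputable section

/-- An algebraic closure of `ℚ`. -/
abbrev Qbar : Type := AlgebraicClosure ℚ

/-- The image of `ℚ*` in `Qbar*`. -/
def ratUnits : Subgroup Qbarˣ :=
  (Units.map (algebraMap ℚ Qbar).toMonoidHom).range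

/-- The group `R_P = {x ∈ ℚ̄* : x^P ∈ ⟨r⟩}` of `P`-th radicals of `⟨r⟩`. -/
def radicals (r : ℚˣ) (P : ℕ) : Subgroup Qbarˣ :=
  Subgroup.comap (powMonoidHom P)
    (Subgroup.zpowers (Units.map (algebraMap ℚ Qbar).toMonoidHom r))

/-- The subgroup `μ_P · (R_P ∩ ℚ*)` of `R_P`. -/
def radicalsBase (r : ℚˣ) (P : ℕ) : Subgroup (radicals r P) :=
  (rootsOfUnity P Qbar ⊔ (ratUnits ⊓ radicals r P)).subgroupOf (radicals r P)

/-- The cyclic quotient `C_P = R_P / (μ_P · (R_P ∩ ℚ*))`. -/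
def radicalQuot (r : ℚˣ) (P : ℕ) : Type :=
  radicals r P ⧸ radicalsBase r P

namespace CardAux

abbrev ι : ℚˣ →* Qbarˣ := Units.map (algebraMap ℚ Qbar).toMonoidHom

lemma ι_inj : Function.Injective (ι : ℚˣ →* Qbarˣ) :=
  Units.map_injective (algebraMap ℚ Qbar).injective

lemma units_pm_one {u : ℚˣ} {n : ℕ} (hn : n ≠ 0) (h : u ^ n = 1) : u = 1 ∨ u = -1 := by
  have : (u : ℚ) ^ n = 1 := by
    have := congrArg (Units.val) h; push_cast at this ⊢; exact this
  rcases pow_eq_one_iff_cases.mp this with h0 | h1 | h2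
  · exact absurd h0 hn
  · exact Or.inl (Units.ext h1)
  · exact Or.inr (Units.ext (by simpa using h2.1))

lemma r_zpow_inj {r : ℚˣ} (h1 : r ≠ 1) (h2 : r ≠ -1) {m n : ℤ}
    (h : (ι r) ^ m = (ι r) ^ n) : m = n := by
  by_contra hne
  have hz : r ^ (m - n) = 1 := by
    apply ι_inj
    rw [map_zpow, map_one, zpow_sub, h, mul_inv_cancel]
  have hz' : r ^ (m - n).natAbs = 1 := by
    rcases Int.natAbs_eq (m - n) with he | he
    · rw [← zpow_natCast, ← he, hz]
    · rw [← zpow_natCast, ← neg_neg ((m - n).natAbs : ℤ), ← he, zpow_neg, hz, inv_one]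
  have hnz : (m - n).natAbs ≠ 0 := by
    simpa [Int.natAbs_eq_zero, sub_eq_zero] using hne
  rcases units_pm_one hnz hz' with h | h
  · exact h1 h
  · exact h2 h

lemma mem_radicals_iff {r : ℚˣ} {P : ℕ} {x : Qbarˣ} :
    x ∈ radicals r P ↔ ∃ n : ℤ, (ι r) ^ n = x ^ P := by
  rw [radicals, Subgroup.mem_comap, powMonoidHom_apply, Subgroup.mem_zpowers_iff]

lemma card_eq_d (r : ℚˣ) (h1 : r ≠ 1) (h2 : r ≠ -1) (P : ℕ) (hP : P ≠ 0)
    (d : ℕ) (hiff : ∀ n : ℤ, (∃ q : ℚˣ, q ^ P = r ^ n) ↔ (d : ℤ) ∣ n) :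
    Nat.card (radicalQuot r P) = d := by
  set rb : Qbarˣ := ι r with hrb
  have hex : ∀ x : radicals r P, ∃ n : ℤ, rb ^ n = (x : Qbarˣ) ^ P :=
    fun x => mem_radicals_iff.mp x.2
  set φ : radicals r P → ℤ := fun x => Classical.choose (hex x) with hφdef
  have hφ : ∀ x : radicals r P, rb ^ (φ x) = (x : Qbarˣ) ^ P :=
    fun x => Classical.choose_spec (hex x)
  have huniq : ∀ (x : radicals r P) (n : ℤ), rb ^ n = (x : Qbarˣ) ^ P → φ x = n := by
    intro x n hn
    exact r_zpow_inj h1 h2 ((hφ x).trans hn.symm)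
  let f : radicals r P →* Multiplicative ℤ := MonoidHom.mk' (fun x => Multiplicative.ofAdd (φ x))
    (by
      intro x y
      have : φ (x * y) = φ x + φ y := by
        apply huniq
        rw [zpow_add, hφ x, hφ y]
        push_cast
        rw [mul_pow]
      simp [this, ofAdd_add])
  have hfφ : ∀ x, f x = Multiplicative.ofAdd (φ x) := fun _ => rfl
  have hsurj : Function.Surjective f := by
    intro m
    obtain ⟨z, hz⟩ := IsAlgClosed.exists_pow_nat_eq ((rb ^ (Multiplicative.toAdd m) : Qbarˣ) : Qbar)
      (Nat.pos_of_ne_zero hP)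
    have hz0 : z ≠ 0 := by
      intro h0
      rw [h0, zero_pow hP] at hz
      exact Units.ne_zero _ hz.symm
    have hu : (Units.mk0 z hz0) ^ P = rb ^ (Multiplicative.toAdd m) := by
      ext
      rw [Units.val_pow_eq_pow_val, Units.val_mk0]
      exact hz
    refine ⟨⟨Units.mk0 z hz0, mem_radicals_iff.mpr ⟨_, hu.symm⟩⟩, ?_⟩
    rw [hfφ, huniq _ _ hu.symm]
    simp
  have hker : f.ker = (rootsOfUnity P Qbar).subgroupOf (radicals r P) := by
    ext x
    rw [MonoidHom.mem_ker, Subgroup.mem_subgroupOf, mem_rootsOfUnity, hfφ]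
    constructor
    · intro h
      have h0 : φ x = 0 := by simpa using congrArg Multiplicative.toAdd h
      have h2 := hφ x
      rw [h0, zpow_zero] at h2
      exact h2.symm
    · intro h
      have : φ x = 0 := huniq x 0 (by rw [zpow_zero, h])
      simp [this]
  have hker_le : f.ker ≤ radicalsBase r P := by
    rw [hker, radicalsBase]
    intro x hx
    rw [Subgroup.mem_subgroupOf] at hx ⊢
    exact Subgroup.mem_sup_left hx
  have hmap : (radicalsBase r P).map f = Subgroup.zpowers (Multiplicative.ofAdd (d : ℤ)) := by
    ext m
    rw [Subgroup.mem_map]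
    constructor
    · rintro ⟨x, hxB, hfx⟩
      rw [radicalsBase, Subgroup.mem_subgroupOf] at hxB
      obtain ⟨ζ, hζ, u, hu, hmul⟩ := Subgroup.mem_sup.mp hxB
      obtain ⟨q, hq⟩ := MonoidHom.mem_range.mp hu.1
      rw [mem_rootsOfUnity] at hζ
      have hxP : (x : Qbarˣ) ^ P = ι (q ^ P) := by
        rw [map_pow, hq, ← hmul, mul_pow, hζ, one_mul]
      have hq' : q ^ P = r ^ (φ x) := by
        apply ι_inj
        rw [map_zpow, ← hrb, hφ x, hxP]
      have hd : (d : ℤ) ∣ φ x := (hiff (φ x)).mp ⟨q, hq'⟩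
      rw [← hfx, hfφ]
      rw [Subgroup.mem_zpowers_iff]
      obtain ⟨c, hc⟩ := hd
      exact ⟨c, by rw [← ofAdd_zsmul]; congr 1; rw [smul_eq_mul, hc, mul_comm]⟩
    · intro hm
      rw [Subgroup.mem_zpowers_iff] at hm
      obtain ⟨c, hc⟩ := hm
      set n : ℤ := Multiplicative.toAdd m with hn
      have hdn : (d : ℤ) ∣ n := by
        refine ⟨c, ?_⟩
        have := congrArg Multiplicative.toAdd hc
        rw [← ofAdd_zsmul] at this
        simpa [mul_comm] using this.symm
      obtain ⟨q, hq⟩ := (hiff n).mpr hdn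
      obtain ⟨x, hx⟩ := hsurj m
      have hφx : φ x = n := by
        have h' := congrArg Multiplicative.toAdd hx
        rw [hfφ] at h'
        simpa using h' 
      have hxP : (x : Qbarˣ) ^ P = (ι q) ^ P := by
        rw [← hφ x, hφx, ← map_pow, hq, map_zpow]
      refine ⟨x, ?_, hx⟩
      rw [radicalsBase, Subgroup.mem_subgroupOf]
      have hζmem : (x : Qbarˣ) * (ι q)⁻¹ ∈ rootsOfUnity P Qbar := by
        rw [mem_rootsOfUnity, mul_pow, inv_pow, ← hxP, mul_inv_cancel]
      have hqR : ι q ∈ radicals r P := by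
        rw [mem_radicals_iff]
        exact ⟨n, by rw [← hxP, ← hφ x, hφx]⟩
      have : (x : Qbarˣ) = ((x : Qbarˣ) * (ι q)⁻¹) * (ι q) := by group
      rw [this]
      exact Subgroup.mul_mem_sup hζmem ⟨⟨q, rfl⟩, hqR⟩
  have hcard : Nat.card (radicalQuot r P) = (radicalsBase r P).index := rfl
  rw [hcard, ← Subgroup.index_map_eq (radicalsBase r P) hsurj hker_le, hmap]
  have : Subgroup.zpowers (Multiplicative.ofAdd (d : ℤ)) =
      AddSubgroup.toSubgroup (AddSubgroup.zmultiples (d : ℤ)) := by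
    ext y
    rw [Subgroup.mem_zpowers_iff]
    constructor
    · rintro ⟨k, hk⟩
      change Multiplicative.toAdd y ∈ AddSubgroup.zmultiples (d : ℤ)
      rw [AddSubgroup.mem_zmultiples_iff]
      exact ⟨k, by have := congrArg Multiplicative.toAdd hk; simpa [← ofAdd_zsmul, mul_comm] using this⟩
    · intro hy
      change Multiplicative.toAdd y ∈ AddSubgroup.zmultiples (d : ℤ) at hy
      rw [AddSubgroup.mem_zmultiples_iff] at hy
      obtain ⟨k, hk⟩ := hy
      exact ⟨k, by rw [← ofAdd_zsmul, hk]; simp⟩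
  rw [this, AddSubgroup.index_toSubgroup, Int.index_zmultiples, Int.natAbs_natCast]

lemma pm_zpow {ε : ℚˣ} (hε : ε = 1 ∨ ε = -1) (z : ℤ) : ε ^ z = 1 ∨ ε ^ z = -1 := by
  rcases hε with h | h
  · subst h; left; simp
  · subst h
    rcases Int.even_or_odd z with hz | hz
    · left; exact hz.neg_one_zpow
    · right
      obtain ⟨w, hw⟩ := hz
      have h2 : ((-1 : ℚˣ)) ^ (2 : ℤ) = 1 := by
        rw [zpow_two]; simp
      rw [hw, zpow_add, zpow_one, zpow_mul, h2, one_zpow, one_mul]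

lemma exists_pow_eq_iff (r r₀ : ℚˣ) (e : ℕ)
    (hnp : ∀ m : ℕ, 2 ≤ m → (¬∃ s : ℚˣ, s ^ m = r₀) ∧ (¬∃ s : ℚˣ, s ^ m = -r₀))
    (ε : ℚˣ) (hε : ε = 1 ∨ ε = -1) (hr : r = ε * r₀ ^ e)
    (P : ℕ) (hP : P ≠ 0) (n : ℤ) :
    (∃ q : ℚˣ, q ^ P = r ^ n) ↔
      ((P : ℤ) ∣ (e : ℤ) * n ∧ (Even P → (0 < (r : ℚ) ∨ Even n))) := by
  have hrn : r ^ n = ε ^ n * r₀ ^ ((e : ℤ) * n) := by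
    rw [hr, mul_zpow, ← zpow_natCast r₀ e, ← zpow_mul]
  constructor
  · rintro ⟨q, hq⟩
    have hq' : q ^ (P : ℤ) = ε ^ n * r₀ ^ ((e : ℤ) * n) := by
      rw [zpow_natCast, hq, hrn]
    constructor
    · -- divisibility
      set g : ℕ := Int.gcd ((e : ℤ) * n) (P : ℤ) with hgdef
      have hg0 : g ≠ 0 := by
        simp only [hgdef, Ne, Int.gcd_eq_zero_iff, not_and]
        intro _ h; exact hP (by exact_mod_cast h)
      have hgP : (g : ℤ) ∣ (P : ℤ) := Int.gcd_dvd_right _ _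
      obtain ⟨m, hm⟩ : g ∣ P := by exact_mod_cast hgP
      have hm0 : m ≠ 0 := by rintro rfl; rw [mul_zero] at hm; exact hP hm
      set a : ℤ := Int.gcdA ((e : ℤ) * n) (P : ℤ)
      set b : ℤ := Int.gcdB ((e : ℤ) * n) (P : ℤ)
      have hbez : (g : ℤ) = (e : ℤ) * n * a + (P : ℤ) * b := Int.gcd_eq_gcd_ab _ _
      set t : ℚˣ := q ^ a * r₀ ^ b with htdef
      have key : r₀ ^ (g : ℤ) = ε ^ (n * a) * (t ^ m) ^ (g : ℤ) := by
        calc r₀ ^ (g : ℤ) = r₀ ^ ((e : ℤ) * n * a + (P : ℤ) * b) := by rw [← hbez]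
          _ = (r₀ ^ ((e : ℤ) * n)) ^ a * (r₀ ^ b) ^ (P : ℤ) := by
              rw [zpow_add, mul_comm (P : ℤ) b, zpow_mul r₀ ((e : ℤ) * n) a, zpow_mul r₀ b (P : ℤ)]
          _ = ((ε ^ n)⁻¹ * q ^ (P : ℤ)) ^ a * (r₀ ^ b) ^ (P : ℤ) := by
              rw [hq', inv_mul_cancel_left]
          _ = ((ε ^ n)⁻¹) ^ a * ((q ^ a) ^ (P : ℤ) * (r₀ ^ b) ^ (P : ℤ)) := by
              rw [mul_zpow, mul_assoc, ← zpow_mul q, mul_comm (P : ℤ) a, zpow_mul]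
          _ = ε ^ (n * a) * t ^ (P : ℤ) := by
              have hinv : (ε ^ n)⁻¹ = ε ^ n := by
                rcases pm_zpow hε n with h | h <;> rw [h] <;> norm_num
              rw [hinv, ← zpow_mul ε n a, htdef, mul_zpow]
          _ = ε ^ (n * a) * (t ^ m) ^ (g : ℤ) := by
              rw [← zpow_natCast t m, ← zpow_mul, hm]
              push_cast
              rw [mul_comm (m : ℤ) (g : ℤ)]
      set ζ : ℚˣ := r₀ * (t ^ m)⁻¹ with hζdef
      have hζg : ζ ^ (g : ℤ) = ε ^ (n * a) := by
        rw [hζdef, mul_zpow, key, inv_zpow, mul_assoc, mul_inv_cancel, mul_one]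
      have hζpm : ζ ^ g = 1 ∨ ζ ^ g = -1 := by
        have := hζg ▸ pm_zpow hε (n * a)
        rwa [zpow_natCast] at this
      have hζ2g : ζ ^ (g * 2) = 1 := by
        rw [pow_mul]
        rcases hζpm with h | h <;> rw [h] <;> simp
      have hζ1 : ζ = 1 ∨ ζ = -1 := units_pm_one (by omega) hζ2g
      have hr₀ : r₀ = ζ * t ^ m := by rw [hζdef, inv_mul_cancel_right]
      have hm1 : m = 1 := by
        by_contra hm1
        have hm2 : 2 ≤ m := by omega
        rcases hζ1 with h | h
        · exact (hnp m hm2).1 ⟨t, by rw [hr₀, h, one_mul]⟩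
        · exact (hnp m hm2).2 ⟨t, by rw [hr₀, h, neg_one_mul, neg_neg]⟩
      have hgP' : g = P := by rw [hm, hm1, mul_one]
      rw [hgdef] at hgP'
      have hfin : ((((e : ℤ) * n).gcd (P : ℤ) : ℕ) : ℤ) ∣ (e : ℤ) * n := Int.gcd_dvd_left _ _
      rwa [hgP'] at hfin
    · -- sign
      intro hPeven
      by_contra hcon
      push_neg at hcon
      obtain ⟨hr0, hnodd⟩ := hcon
      have hrneg : (r : ℚ) < 0 := hr0.lt_of_ne (Units.ne_zero r)
      have h1 : ((r ^ n : ℚˣ) : ℚ) < 0 := by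
        rw [Units.val_zpow_eq_zpow_val]
        exact (Odd.zpow_neg_iff (Int.not_even_iff_odd.mp hnodd)).mpr hrneg
      have h2 : 0 ≤ ((q ^ P : ℚˣ) : ℚ) := by
        rw [Units.val_pow_eq_pow_val]
        exact hPeven.pow_nonneg _
      rw [hq] at h2
      exact absurd h1 (not_lt.mpr h2)
  · rintro ⟨⟨c, hc⟩, hsign⟩
    have hδ := pm_zpow hε n
    have hkey : (ε ^ n) ^ P = ε ^ n := by
      rcases hδ with h | h
      · rw [h, one_pow]
      · rcases Nat.even_or_odd P with hPe | hPo
        · exfalso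
          have hnodd : ¬ Even n := by
            intro hne
            have h1 : ε ^ n = 1 := by
              rcases hε with h1 | h1 <;> subst h1
              · simp
              · exact hne.neg_one_zpow
            rw [h1] at h
            have := congrArg Units.val h
            norm_num at this
          rcases hsign hPe with hrpos | hne
          · have hval : ((r ^ n : ℚˣ) : ℚ) = -(((r₀ ^ c : ℚˣ) : ℚ) ^ P) := by
              rw [hrn, h, hc, mul_comm (P : ℤ) c, zpow_mul, zpow_natCast]
              push_cast
              ring
            have hpos : (0 : ℚ) < ((r ^ n : ℚˣ) : ℚ) := by
              rw [Units.val_zpow_eq_zpow_val]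
              exact zpow_pos hrpos n
            have hneg : (0 : ℚ) < (((r₀ ^ c : ℚˣ) : ℚ) ^ P) :=
              hPe.pow_pos (Units.ne_zero _)
            rw [hval] at hpos
            linarith
          · exact hnodd hne
        · rw [h, hPo.neg_one_pow]
    refine ⟨ε ^ n * r₀ ^ c, ?_⟩
    rw [mul_pow, hkey, hrn, ← zpow_natCast (r₀ ^ c) P, ← zpow_mul, mul_comm c (P : ℤ), ← hc]

lemma isSquare_neg_val {r : ℚˣ} (h : IsSquare (-r)) : (r : ℚ) < 0 := by
  obtain ⟨s, hs⟩ := h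
  have hval : ((-r : ℚˣ) : ℚ) = (s : ℚ) * (s : ℚ) := by rw [hs]; push_cast; ring
  rw [Units.val_neg] at hval
  nlinarith [mul_self_pos.mpr (Units.ne_zero s), Units.ne_zero s]

lemma isSquare_neg_of_neg {r r₀ : ℚˣ} {e : ℕ} (hrep : r = r₀ ^ e ∨ r = -r₀ ^ e)
    (heven : 2 ∣ e) (hneg : (r : ℚ) < 0) : IsSquare (-r) := by
  rcases hrep with h | h
  · exfalso
    have : (r : ℚ) = (r₀ : ℚ) ^ e := by rw [h]; push_cast; ring
    have hpos : (0 : ℚ) < (r₀ : ℚ) ^ e :=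
      ((even_iff_two_dvd.mpr heven)).pow_pos (Units.ne_zero r₀)
    linarith [this ▸ hneg]
  · refine ⟨r₀ ^ (e / 2), ?_⟩
    rw [h, neg_neg, ← pow_add]
    congr 1
    omega

lemma dvd_iff_div_gcd {P e : ℕ} (hP : P ≠ 0) (n : ℤ) :
    (P : ℤ) ∣ (e : ℤ) * n ↔ ((P / Nat.gcd P e : ℕ) : ℤ) ∣ n := by
  set g : ℕ := Nat.gcd P e with hg
  have hg0 : g ≠ 0 := fun h => hP (Nat.eq_zero_of_gcd_eq_zero_left h)
  set d : ℕ := P / g with hd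
  set e₁ : ℕ := e / g with he₁
  have hPd : P = g * d := (Nat.mul_div_cancel' (Nat.gcd_dvd_left P e)).symm
  have hee : e = g * e₁ := (Nat.mul_div_cancel' (Nat.gcd_dvd_right P e)).symm
  have hcop : IsCoprime (d : ℤ) (e₁ : ℤ) := by
    rw [Int.isCoprime_iff_gcd_eq_one, Int.gcd_natCast_natCast]
    exact Nat.coprime_div_gcd_div_gcd (Nat.pos_of_ne_zero hg0)
  constructor
  · intro hdvd
    have h1 : ((g : ℤ) * d) ∣ ((g : ℤ) * e₁) * n := by
      rw [← Nat.cast_mul, ← hPd, ← Nat.cast_mul, ← hee]; exact hdvd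
    rw [mul_assoc] at h1
    have h2 : (d : ℤ) ∣ (e₁ : ℤ) * n :=
      (mul_dvd_mul_iff_left (by exact_mod_cast hg0 : (g : ℤ) ≠ 0)).mp h1
    exact hcop.dvd_of_dvd_mul_left h2
  · rintro ⟨c, hc⟩
    refine ⟨(e₁ : ℤ) * c, ?_⟩
    rw [hPd, hee]
    push_cast
    rw [hc]
    ring

lemma div_gcd_eq_one_iff {P e : ℕ} (hP : P ≠ 0) : P / Nat.gcd P e = 1 ↔ P ∣ e := by
  constructor
  · intro h
    have h2 : P = Nat.gcd P e := by
      have := (Nat.mul_div_cancel' (Nat.gcd_dvd_left P e)).symm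
      rw [h, mul_one] at this
      exact this
    exact h2 ▸ Nat.gcd_dvd_right P e
  · intro h
    rw [Nat.gcd_eq_left h, Nat.div_self (Nat.pos_of_ne_zero hP)]

end CardAux

/-- The group `C_P = R_P/(μ_P·(R_P ∩ ℚ*))` has order `P/gcd(P,e)`, except in the twisted
case where `-r` is a square and `P > 1` is a `2`-power dividing `e`, when it has order `2`. -/
theorem card_radicalQuot (r r₀ : ℚˣ) (e : ℕ) (he : 1 ≤ e)
    (h1 : r ≠ 1) (h2 : r ≠ -1)
    (hrep : r = r₀ ^ e ∨ r = -r₀ ^ e)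
    (hnp : ∀ m : ℕ, 2 ≤ m → (¬∃ s : ℚˣ, s ^ m = r₀) ∧ (¬∃ s : ℚˣ, s ^ m = -r₀))
    (p k : ℕ) (hp : p.Prime) (hk : 1 ≤ k) :
    (¬(p = 2 ∧ p ^ k ∣ e ∧ IsSquare (-r)) →
      Nat.card (radicalQuot r (p ^ k)) = p ^ k / Nat.gcd (p ^ k) e) ∧
    ((p = 2 ∧ p ^ k ∣ e ∧ IsSquare (-r)) →
      Nat.card (radicalQuot r (p ^ k)) = 2) := by

  set P := p ^ k with hPdef
  have hP : P ≠ 0 := pow_ne_zero k hp.pos.ne'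
  obtain ⟨ε, hε, hrε⟩ : ∃ ε : ℚˣ, (ε = 1 ∨ ε = -1) ∧ r = ε * r₀ ^ e := by
    rcases hrep with h | h
    · exact ⟨1, Or.inl rfl, by rw [h, one_mul]⟩
    · exact ⟨-1, Or.inr rfl, by rw [h, neg_one_mul]⟩
  have hiffA : ∀ n : ℤ, (∃ q : ℚˣ, q ^ P = r ^ n) ↔
      ((P : ℤ) ∣ (e : ℤ) * n ∧ (Even P → (0 < (r : ℚ) ∨ Even n))) :=
    CardAux.exists_pow_eq_iff r r₀ e hnp ε hε hrε P hP
  constructor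
  · intro hno
    apply CardAux.card_eq_d r h1 h2 P hP (P / Nat.gcd P e)
    intro n
    rw [hiffA n]
    constructor
    · rintro ⟨hdvd, _⟩
      exact (CardAux.dvd_iff_div_gcd hP n).mp hdvd
    · intro hdn
      refine ⟨(CardAux.dvd_iff_div_gcd hP n).mpr hdn, ?_⟩
      intro hPeven
      by_cases hp2 : p = 2
      · by_cases hrpos : 0 < (r : ℚ)
        · exact Or.inl hrpos
        · right
          have hrneg : (r : ℚ) < 0 := (not_lt.mp hrpos).lt_of_ne (Units.ne_zero r)
          have h2P : 2 ∣ P := by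
            rw [hPdef, hp2]
            exact dvd_pow_self 2 (by omega)
          have hnPe : ¬ P ∣ e := by
            intro hPe
            exact hno ⟨hp2, hPe,
              CardAux.isSquare_neg_of_neg hrep (dvd_trans h2P hPe) hrneg⟩
          have hd1 : P / Nat.gcd P e ≠ 1 := fun h =>
            hnPe ((CardAux.div_gcd_eq_one_iff hP).mp h)
          have hdP : (P / Nat.gcd P e) ∣ P := Nat.div_dvd_of_dvd (Nat.gcd_dvd_left P e)
          obtain ⟨i, hik, hdi⟩ := (Nat.dvd_prime_pow hp).mp (hPdef ▸ hdP)
          have hi0 : i ≠ 0 := by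
            rintro rfl
            rw [pow_zero] at hdi
            exact hd1 hdi
          have h2d : 2 ∣ P / Nat.gcd P e := by
            rw [hdi, hp2]
            exact dvd_pow_self 2 hi0
          obtain ⟨c, hc⟩ := hdn
          obtain ⟨j, hj⟩ := h2d
          refine even_iff_two_dvd.mpr ⟨(j : ℤ) * c, ?_⟩
          rw [hc, hj]
          push_cast
          ring
      · exfalso
        exact (Nat.not_even_iff_odd.mpr ((hp.odd_of_ne_two hp2).pow)) hPeven
  · rintro ⟨hp2, hPe, hsq⟩
    apply CardAux.card_eq_d r h1 h2 P hP 2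
    intro n
    rw [hiffA n]
    have hrneg := CardAux.isSquare_neg_val hsq
    have hPdvd : (P : ℤ) ∣ (e : ℤ) * n := by
      obtain ⟨c, hc⟩ := hPe
      exact ⟨(c : ℤ) * n, by rw [hc]; push_cast; ring⟩
    have hPeven : Even P := by
      rw [hPdef, hp2]
      exact (Nat.even_pow).mpr ⟨even_two, by omega⟩
    have hcast : ((2 : ℕ) : ℤ) = 2 := by norm_num
    constructor
    · rintro ⟨_, hsign⟩
      rcases hsign hPeven with h | h
      · linarith
      · rw [hcast]
        exact even_iff_two_dvd.mp h
    · intro h2n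
      rw [hcast] at h2n
      exact ⟨hPdvd, fun _ => Or.inr (even_iff_two_dvd.mpr h2n)⟩


end
end

section
/- Let r ∈ ℚ* be neither 0, 1, nor −1, and assume neither r₀ nor −r₀ is a perfect power in ℚ* (where r = ±r₀^e as usual). Then the largest integer k for which the splitting field of X^k − r₀ over ℚ is abelian equals 2; equivalently, r₀^ℚ ∩ ℚ_ab* = r₀^{(1/2)ℤ}. -/
open Polynomial

section AuxLemmas

variable {L : Type} [Field L] [Algebra ℚ L]

private lemma exists_root_of_splits' {K M : Type*} [Field K] [Field M] (i : K →+* M) {f : K[X]}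
    (hs : Splits (f.map i)) (hf0 : degree f ≠ 0) : ∃ x, eval₂ i x f = 0 := by
  obtain ⟨x, hx⟩ := hs.exists_eval_eq_zero (by rwa [degree_map])
  exact ⟨x, by rwa [eval_map] at hx⟩

private lemma fixed_mem_bot [FiniteDimensional ℚ L] [IsGalois ℚ L]
    {x : L} (h : ∀ σ : L ≃ₐ[ℚ] L, σ x = x) : ∃ y : ℚ, algebraMap ℚ L y = x := by
  have hx : x ∈ IntermediateField.fixedField
      (IntermediateField.fixingSubgroup (⊥ : IntermediateField ℚ L)) := fun g => h g.1
  rw [IsGalois.fixedField_fixingSubgroup] at hx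
  exact IntermediateField.mem_bot.mp hx

private lemma finrank_mono_int [FiniteDimensional ℚ L]
    {K₁ K₂ : IntermediateField ℚ L} (h : K₁ ≤ K₂) :
    Module.finrank ℚ K₁ ≤ Module.finrank ℚ K₂ :=
  Submodule.finrank_mono (show K₁.toSubalgebra.toSubmodule ≤ K₂.toSubalgebra.toSubmodule from h)

/-- The case `4 ∣ k` : if the Galois group is abelian then `-r₀` is a square. -/
private lemma quartic_case [FiniteDimensional ℚ L] [IsGalois ℚ L]
    (r₀ : ℚ) (h0 : r₀ ≠ 0)
    (hns : ¬∃ s : ℚ, s ^ 2 = r₀) (hns' : ¬∃ s : ℚ, s ^ 2 = -r₀)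
    (γ : L) (hγ : γ ^ 4 = algebraMap ℚ L r₀)
    (hcomm : ∀ σ τ : L ≃ₐ[ℚ] L, σ * τ = τ * σ) : False := by
  have hchar : CharZero L := charZero_of_injective_algebraMap (algebraMap ℚ L).injective
  have hinj := (algebraMap ℚ L).injective
  set r : L := algebraMap ℚ L r₀ with hrdef
  have hr0 : r ≠ 0 := fun h => h0 (hinj (h.trans (map_zero _).symm))
  have hγ0 : γ ≠ 0 := by
    intro h
    rw [h, zero_pow (by norm_num)] at hγ
    exact hr0 hγ.symm
  set β : L := γ ^ 2 with hβdef
  have hβ2 : β ^ 2 = r := by rw [hβdef, ← pow_mul]; exact hγ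
  have hβ0 : β ≠ 0 := pow_ne_zero 2 hγ0
  have hirr : Irreducible (X ^ 2 - C r₀ : ℚ[X]) :=
    X_pow_sub_C_irreducible_of_prime Nat.prime_two (fun b hb => hns ⟨b, hb⟩)
  have hmono : (X ^ 2 - C r₀ : ℚ[X]).Monic := monic_X_pow_sub_C _ two_ne_zero
  have haev : ∀ x : L, x ^ 2 = r → (Polynomial.aeval x) (X ^ 2 - C r₀ : ℚ[X]) = 0 := by
    intro x hx
    rw [map_sub, map_pow, aeval_X, aeval_C, hx, sub_self]
  have hminβ : minpoly ℚ β = X ^ 2 - C r₀ :=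
    (minpoly.eq_of_irreducible_of_monic hirr (haev β hβ2) hmono).symm
  have hminnβ : minpoly ℚ (-β) = X ^ 2 - C r₀ :=
    (minpoly.eq_of_irreducible_of_monic hirr (haev (-β) (by rw [neg_pow, Even.neg_one_pow (by norm_num), one_mul]; exact hβ2)) hmono).symm
  obtain ⟨τ, hτβ⟩ : ∃ τ : L ≃ₐ[ℚ] L, τ β = -β :=
    IsConjRoot.exists_algEquiv (isConjRoot_def.mpr (hminnβ.trans hminβ.symm))
  set j : L := τ γ * γ⁻¹ with hjdef
  have hτγ : τ γ = j * γ := by rw [hjdef, inv_mul_cancel_right₀ hγ0]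
  have hj2 : j ^ 2 = -1 := by
    have h1 : (τ γ) ^ 2 = -β := by rw [← map_pow, ← hβdef, hτβ]
    have h2 : j ^ 2 = (τ γ) ^ 2 * (γ ^ 2)⁻¹ := by rw [hjdef, mul_pow, inv_pow]
    rw [h2, h1, ← hβdef, neg_mul, mul_inv_cancel₀ hβ0]
  have hj0 : j ≠ 0 := by
    intro h
    rw [h, zero_pow (by norm_num)] at hj2
    exact zero_ne_one (by rw [← neg_neg (1 : L), ← hj2, neg_zero])
  have hcls : ∀ x : L, x ^ 4 = 1 → x = 1 ∨ x = -1 ∨ x = j ∨ x = -j := by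
    intro x hx
    have h1 : (x ^ 2 - 1) * (x ^ 2 + 1) = 0 := by linear_combination hx
    rcases mul_eq_zero.mp h1 with h | h
    · have h2 : (x - 1) * (x + 1) = 0 := by linear_combination h
      rcases mul_eq_zero.mp h2 with h' | h'
      · exact Or.inl (sub_eq_zero.mp h')
      · exact Or.inr (Or.inl (eq_neg_of_add_eq_zero_left h'))
    · have h2 : (x - j) * (x + j) = 0 := by linear_combination h - hj2
      rcases mul_eq_zero.mp h2 with h' | h'
      · exact Or.inr (Or.inr (Or.inl (sub_eq_zero.mp h')))
      · exact Or.inr (Or.inr (Or.inr (eq_neg_of_add_eq_zero_left h')))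
  have hsj : ∀ σ : L ≃ₐ[ℚ] L, σ j = j ∨ σ j = -j := by
    intro σ
    have h1 : (σ j) ^ 2 = -1 := by rw [← map_pow, hj2, map_neg, map_one]
    have h2 : (σ j - j) * (σ j + j) = 0 := by linear_combination h1 - hj2
    rcases mul_eq_zero.mp h2 with h' | h'
    · exact Or.inl (sub_eq_zero.mp h')
    · exact Or.inr (eq_neg_of_add_eq_zero_left h')
  have hsγ : ∀ σ : L ≃ₐ[ℚ] L, ∃ w : L, (w = 1 ∨ w = -1 ∨ w = j ∨ w = -j) ∧ σ γ = w * γ := by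
    intro σ
    refine ⟨σ γ * γ⁻¹, hcls _ ?_, by field_simp⟩
    rw [mul_pow, inv_pow, ← map_pow, hγ, AlgEquiv.commutes]
    exact mul_inv_cancel₀ hr0
  have hct : ∀ σ : L ≃ₐ[ℚ] L, σ (τ γ) = τ (σ γ) := by
    intro σ
    have h := DFunLike.congr_fun (hcomm σ τ) γ
    simpa [AlgEquiv.mul_apply] using h
  have h2γ : (2 : L) ≠ 0 := two_ne_zero
  by_cases hτj : τ j = j
  · obtain ⟨σ₀, hσ₀ne⟩ : ∃ σ₀ : L ≃ₐ[ℚ] L, σ₀ j ≠ j := by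
      by_contra hall
      push_neg at hall
      obtain ⟨y, hy⟩ := fixed_mem_bot hall
      have hy2 : y ^ 2 = -1 := by
        apply hinj
        rw [map_pow, hy, hj2, map_neg, map_one]
      nlinarith [sq_nonneg y]
    have hσ₀j : σ₀ j = -j := (hsj σ₀).resolve_left hσ₀ne
    obtain ⟨w, hw, hσ₀γ⟩ := hsγ σ₀
    have hw0 : w ≠ 0 := by
      rcases hw with rfl | rfl | rfl | rfl
      · exact one_ne_zero
      · exact neg_ne_zero.mpr one_ne_zero
      · exact hj0
      · exact neg_ne_zero.mpr hj0
    have hτw : τ w = w := by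
      rcases hw with rfl | rfl | rfl | rfl
      · exact map_one τ
      · rw [map_neg, map_one]
      · exact hτj
      · rw [map_neg, hτj]
    have e : -j * (w * γ) = w * (j * γ) := by
      have hL : σ₀ (τ γ) = -j * (w * γ) := by rw [hτγ, map_mul, hσ₀j, hσ₀γ]
      have hR : τ (σ₀ γ) = w * (j * γ) := by rw [hσ₀γ, map_mul, hτw, hτγ]
      rw [← hL, ← hR]
      exact hct σ₀
    have h2 : (2 : L) * j * w * γ = 0 := by linear_combination -e
    exact mul_ne_zero (mul_ne_zero (mul_ne_zero h2γ hj0) hw0) hγ0 h2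
  · have hτj' : τ j = -j := (hsj τ).resolve_left hτj
    have key : ∀ σ : L ≃ₐ[ℚ] L, σ (j * β) = j * β := by
      intro σ
      obtain ⟨w, hw, hσγ⟩ := hsγ σ
      have hσβ : σ β = w ^ 2 * β := by rw [hβdef, map_pow, hσγ, mul_pow]
      have e : σ j * (w * γ) = τ w * (j * γ) := by
        have hL : σ (τ γ) = σ j * (w * γ) := by rw [hτγ, map_mul, hσγ]
        have hR : τ (σ γ) = τ w * (j * γ) := by rw [hσγ, map_mul, hτγ]
        rw [← hL, ← hR]
        exact hct σ
      rcases hsj σ with hσj | hσj <;> rcases hw with rfl | rfl | rfl | rfl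
      · rw [map_mul, hσj, hσβ]; ring
      · rw [map_mul, hσj, hσβ]; ring
      · -- σ j = j, w = j : contradiction
        exfalso
        rw [hτj'] at e
        rw [hσj] at e
        have h2 : (2 : L) * (j ^ 2 * γ) = 0 := by linear_combination e
        rw [hj2] at h2
        apply mul_ne_zero h2γ (mul_ne_zero (neg_ne_zero.mpr one_ne_zero) hγ0)
        linear_combination h2
      · -- σ j = j, w = -j : contradiction
        exfalso
        rw [map_neg, hτj'] at e
        rw [hσj] at e
        have h2 : (2 : L) * (j ^ 2 * γ) = 0 := by linear_combination -e
        rw [hj2] at h2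
        apply mul_ne_zero h2γ (mul_ne_zero (neg_ne_zero.mpr one_ne_zero) hγ0)
        linear_combination h2
      · -- σ j = -j, w = 1 : contradiction
        exfalso
        rw [map_one, hσj] at e
        have h2 : (2 : L) * (j * γ) = 0 := by linear_combination -e
        exact mul_ne_zero h2γ (mul_ne_zero hj0 hγ0) h2
      · -- σ j = -j, w = -1 : contradiction
        exfalso
        rw [map_neg, map_one, hσj] at e
        have h2 : (2 : L) * (j * γ) = 0 := by linear_combination e
        exact mul_ne_zero h2γ (mul_ne_zero hj0 hγ0) h2
      · -- σ j = -j, w = j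
        rw [map_mul, hσj, hσβ, hj2]; ring
      · -- σ j = -j, w = -j
        rw [map_mul, hσj, hσβ, neg_sq, hj2]; ring
    obtain ⟨y, hy⟩ := fixed_mem_bot key
    refine hns' ⟨y, hinj ?_⟩
    rw [map_pow, hy, map_neg]
    calc (j * β) ^ 2 = j ^ 2 * β ^ 2 := by ring
    _ = -r := by rw [hj2, hβ2]; ring

/-- The case of an odd prime `p ∣ k`. -/
private lemma odd_prime_case [FiniteDimensional ℚ L] [IsGalois ℚ L]
    (r₀ : ℚ) (h0 : r₀ ≠ 0) {p : ℕ} (hp : p.Prime) (hodd : Odd p)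
    (hns : ¬∃ s : ℚ, s ^ p = r₀)
    (γ γ' : L) (hγ : γ ^ p = algebraMap ℚ L r₀) (hγ' : γ' ^ p = algebraMap ℚ L r₀)
    (hne : γ' ≠ γ)
    (hcomm : ∀ σ τ : L ≃ₐ[ℚ] L, σ * τ = τ * σ) : False := by
  have hchar : CharZero L := charZero_of_injective_algebraMap (algebraMap ℚ L).injective
  have hinj := (algebraMap ℚ L).injective
  have hp1 : 1 < p := hp.one_lt
  have hp0 : p ≠ 0 := hp.ne_zero
  have hpne2 : p ≠ 2 := by
    rintro rfl
    exact (Nat.not_odd_iff_even.mpr (by decide)) hodd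
  have hp3 : 3 ≤ p := by
    rcases Nat.lt_or_ge p 3 with h | h
    · interval_cases p <;> simp_all
    · exact h
  set r : L := algebraMap ℚ L r₀ with hrdef
  have hr0 : r ≠ 0 := fun h => h0 (hinj (h.trans (map_zero _).symm))
  have hγ0 : γ ≠ 0 := by
    intro h
    rw [h, zero_pow hp0] at hγ
    exact hr0 hγ.symm
  set ζ : L := γ' * γ⁻¹ with hζdef
  have hζγ : ζ * γ = γ' := by rw [hζdef, inv_mul_cancel_right₀ hγ0]
  have hζp : ζ ^ p = 1 := by
    rw [hζdef, mul_pow, inv_pow, hγ', hγ]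
    exact mul_inv_cancel₀ hr0
  have hζ1 : ζ ≠ 1 := fun h => hne (by rw [← hζγ, h, one_mul])
  have hζ0 : ζ ≠ 0 := by
    intro h
    rw [h, zero_pow hp0] at hζp
    exact zero_ne_one hζp
  haveI : NeZero p := ⟨hp0⟩
  have hprim : IsPrimitiveRoot ζ p := by
    have hord : orderOf ζ ∣ p := orderOf_dvd_of_pow_eq_one hζp
    have hord' : orderOf ζ = p :=
      ((Nat.Prime.eq_one_or_self_of_dvd hp _ hord)).resolve_left
        (fun h => hζ1 (orderOf_eq_one_iff.mp h))
    exact hord' ▸ IsPrimitiveRoot.orderOf ζ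
  have hirr : Irreducible (X ^ p - C r₀ : ℚ[X]) :=
    X_pow_sub_C_irreducible_of_prime hp (fun b hb => hns ⟨b, hb⟩)
  have hmono : (X ^ p - C r₀ : ℚ[X]).Monic := monic_X_pow_sub_C _ hp0
  have haev : ∀ x : L, x ^ p = r → (Polynomial.aeval x) (X ^ p - C r₀ : ℚ[X]) = 0 := by
    intro x hx
    rw [map_sub, map_pow, aeval_X, aeval_C, hx, sub_self]
  have hminγ : minpoly ℚ γ = X ^ p - C r₀ :=
    (minpoly.eq_of_irreducible_of_monic hirr (haev γ hγ) hmono).symm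
  have hminγ' : minpoly ℚ γ' = X ^ p - C r₀ :=
    (minpoly.eq_of_irreducible_of_monic hirr (haev γ' hγ') hmono).symm
  obtain ⟨τ, hτγ⟩ : ∃ τ : L ≃ₐ[ℚ] L, τ γ = γ' :=
    IsConjRoot.exists_algEquiv (isConjRoot_def.mpr (hminγ'.trans hminγ.symm))
  rw [← hζγ] at hτγ
  have hform : ∀ σ : L ≃ₐ[ℚ] L, ∃ a, a < p ∧ σ γ = ζ ^ a * γ := by
    intro σ
    have h1 : (σ γ * γ⁻¹) ^ p = 1 := by
      rw [mul_pow, inv_pow, ← map_pow, hγ, AlgEquiv.commutes]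
      exact mul_inv_cancel₀ hr0
    obtain ⟨a, ha, haeq⟩ := hprim.eq_pow_of_pow_eq_one h1
    refine ⟨a, ha, ?_⟩
    rw [haeq]
    field_simp
  have hformζ : ∀ σ : L ≃ₐ[ℚ] L, ∃ c, c < p ∧ σ ζ = ζ ^ c := by
    intro σ
    have h1 : (σ ζ) ^ p = 1 := by rw [← map_pow, hζp, map_one]
    obtain ⟨c, hc, hceq⟩ := hprim.eq_pow_of_pow_eq_one h1
    exact ⟨c, hc, hceq.symm⟩
  have hct : ∀ σ : L ≃ₐ[ℚ] L, σ (τ γ) = τ (σ γ) := by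
    intro σ
    have h := DFunLike.congr_fun (hcomm σ τ) γ
    simpa [AlgEquiv.mul_apply] using h
  obtain ⟨t, htp, hτζ⟩ := hformζ τ
  by_cases ht1 : ζ ^ t = ζ
  · have hτζ' : τ ζ = ζ := by rw [hτζ, ht1]
    obtain ⟨σ, hσζ⟩ : ∃ σ : L ≃ₐ[ℚ] L, σ ζ ≠ ζ := by
      by_contra hall
      push_neg at hall
      obtain ⟨y, hy⟩ := fixed_mem_bot hall
      have hyp : y ^ p = 1 := hinj (by rw [map_pow, hy, hζp, map_one])
      have hy1 : y = 1 := (hodd.strictMono_pow (R := ℚ)).injective (by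
        simpa using hyp.trans (one_pow p).symm)
      exact hζ1 (by rw [← hy, hy1, map_one])
    obtain ⟨c, hcp, hc⟩ := hformζ σ
    obtain ⟨a, hap, ha⟩ := hform σ
    have e := hct σ
    rw [hτγ, map_mul, hc, ha, map_mul, map_pow, hτζ', hτγ] at e
    -- e : ζ ^ c * (ζ ^ a * γ) = ζ ^ a * (ζ * γ)
    have e2 : ζ ^ c * ζ ^ a * γ = ζ * ζ ^ a * γ := by linear_combination e
    have e3 : ζ ^ c * ζ ^ a = ζ * ζ ^ a := mul_right_cancel₀ hγ0 e2
    have e4 : ζ ^ c = ζ := mul_right_cancel₀ (pow_ne_zero a hζ0) e3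
    exact hσζ (by rw [hc, e4])
  · have ht0 : t ≠ 0 := by
      rintro rfl
      rw [pow_zero] at hτζ
      exact hζ1 (τ.injective (by rw [hτζ, map_one]))
    have ht1' : t ≠ 1 := fun h => ht1 (by rw [h, pow_one])
    have key : ∀ σ : L ≃ₐ[ℚ] L, σ ζ = ζ → σ γ = γ := by
      intro σ hσζ
      obtain ⟨a, hap, ha⟩ := hform σ
      have e := hct σ
      rw [hτγ, map_mul, hσζ, ha, map_mul, map_pow, hτζ, hτγ] at e
      -- e : ζ * (ζ ^ a * γ) = (ζ ^ t) ^ a * (ζ * γ)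
      have e2 : ζ ^ (a + 1) * γ = ζ ^ (t * a + 1) * γ := by
        rw [pow_add, pow_one, pow_add, pow_one, pow_mul]
        linear_combination e
      have e3 : ζ ^ (a + 1) = ζ ^ (t * a + 1) := mul_right_cancel₀ hγ0 e2
      have e4 : ζ ^ (t * a) = ζ ^ a := by
        have h5 : ζ ^ (t * a) * ζ = ζ ^ a * ζ := by
          rw [← pow_succ, ← pow_succ]
          exact e3.symm
        exact mul_right_cancel₀ hζ0 h5
      obtain ⟨t', rfl⟩ : ∃ t', t = t' + 1 := ⟨t - 1, by omega⟩
      have e5 : ζ ^ (a * t') = 1 := by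
        have h1 : ζ ^ a * ζ ^ (a * t') = ζ ^ a := by
          rw [← pow_add, show a + a * t' = (t' + 1) * a from by ring]
          exact e4
        have h2 : ζ ^ a * ζ ^ (a * t') = ζ ^ a * 1 := by rw [h1, mul_one]
        exact mul_left_cancel₀ (pow_ne_zero a hζ0) h2
      have e6 : p ∣ a * t' := (hprim.pow_eq_one_iff_dvd _).mp e5
      have e7 : p ∣ a := by
        rcases (Nat.Prime.dvd_mul hp).mp e6 with h | h
        · exact h
        · exfalso
          have := Nat.le_of_dvd (by omega) h
          omega
      have e8 : ζ ^ a = 1 := (hprim.pow_eq_one_iff_dvd a).mpr e7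
      rw [ha, e8, one_mul]
    have hγmem : γ ∈ IntermediateField.adjoin ℚ {ζ} := by
      have h1 : γ ∈ IntermediateField.fixedField
          (IntermediateField.fixingSubgroup (IntermediateField.adjoin ℚ {ζ})) := by
        intro g
        exact key g.1 (g.2 ⟨ζ, IntermediateField.mem_adjoin_simple_self ℚ ζ⟩)
      rwa [IsGalois.fixedField_fixingSubgroup] at h1
    have hd1 : Module.finrank ℚ (IntermediateField.adjoin ℚ {γ}) = p := by
      rw [IntermediateField.adjoin.finrank (IsIntegral.of_finite ℚ γ), hminγ,
        natDegree_X_pow_sub_C]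
    have hle : IntermediateField.adjoin ℚ {γ} ≤ IntermediateField.adjoin ℚ {ζ} := by
      rw [IntermediateField.adjoin_simple_le_iff]
      exact hγmem
    have hmono2 := finrank_mono_int hle
    have hd2 : Module.finrank ℚ (IntermediateField.adjoin ℚ {ζ}) ≤ p - 1 := by
      rw [IntermediateField.adjoin.finrank (IsIntegral.of_finite ℚ ζ)]
      have hdvd : minpoly ℚ ζ ∣ (X ^ p - 1 : ℚ[X]) :=
        minpoly.dvd ℚ ζ (by rw [map_sub, map_pow, aeval_X, map_one, hζp, sub_self])
      have hfac : (X ^ p - 1 : ℚ[X]) = (∑ i ∈ Finset.range p, X ^ i) * (X - C 1) := by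
        rw [map_one]
        exact (geom_sum_mul X p).symm
      have hprime : Prime (minpoly ℚ ζ) :=
        _root_.irreducible_iff_prime.mp (minpoly.irreducible (IsIntegral.of_finite ℚ ζ))
      have hXp0 : (X ^ p - 1 : ℚ[X]) ≠ 0 := by
        have := X_pow_sub_C_ne_zero hp.pos (1 : ℚ)
        rwa [map_one] at this
      rcases (hprime.2.2 _ _ (by rw [← hfac]; exact hdvd)) with hdl | hdl
      · have hg0 : (∑ i ∈ Finset.range p, (X : ℚ[X]) ^ i) ≠ 0 := by
          intro h
          rw [h, zero_mul] at hfac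
          exact hXp0 hfac
        have hled := natDegree_le_of_dvd hdl hg0
        have hgdeg : (∑ i ∈ Finset.range p, (X : ℚ[X]) ^ i).natDegree = p - 1 := by
          have h2 : (X ^ p - 1 : ℚ[X]).natDegree = p := by
            have h3 : (X ^ p - 1 : ℚ[X]) = X ^ p - C 1 := by rw [map_one]
            rw [h3, natDegree_X_pow_sub_C]
          rw [hfac, natDegree_mul hg0 (X_sub_C_ne_zero (1 : ℚ)), natDegree_X_sub_C] at h2
          omega
        omega
      · exfalso
        obtain ⟨c, hc⟩ := hdl
        have h6 : (Polynomial.aeval ζ) ((X : ℚ[X]) - C 1) = 0 := by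
          rw [hc, map_mul, minpoly.aeval, zero_mul]
        rw [map_sub, aeval_X, aeval_C, map_one, sub_eq_zero] at h6
        exact hζ1 h6
    omega

end AuxLemmas

/-- If neither `r₀` nor `-r₀` is a perfect power in `ℚ*`, then the largest `k` for which
the splitting field of `X^k - r₀` over `ℚ` is abelian equals `2`: the splitting field of
`X^k - r₀` has commutative automorphism group if and only if `k ≤ 2`. -/
theorem abelian_splitting_field_binomial_iff (r₀ : ℚ)
    (h0 : r₀ ≠ 0) (h1 : r₀ ≠ 1) (h2 : r₀ ≠ -1)
    (hnp : ∀ m : ℕ, 2 ≤ m → (¬∃ s : ℚ, s ^ m = r₀) ∧ (¬∃ s : ℚ, s ^ m = -r₀)) :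
    ∀ (k : ℕ) (L : Type) [Field L] [Algebra ℚ L],
      IsSplittingField ℚ L (X ^ k - C r₀) →
        ((∀ σ τ : L ≃ₐ[ℚ] L, σ * τ = τ * σ) ↔ k ≤ 2) := by
  intro k L _ _ hsf
  haveI := hsf
  have hinj := (algebraMap ℚ L).injective
  have hchar : CharZero L := charZero_of_injective_algebraMap hinj
  constructor
  · -- abelian → k ≤ 2
    intro hcomm
    by_contra hk2
    push_neg at hk2
    have hk0 : k ≠ 0 := by omega
    haveI : FiniteDimensional ℚ L :=
      Polynomial.IsSplittingField.finiteDimensional L (X ^ k - C r₀ : ℚ[X])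
    have hsep : (X ^ k - C r₀ : ℚ[X]).Separable :=
      separable_X_pow_sub_C _ (Nat.cast_ne_zero.mpr hk0) h0
    haveI : IsGalois ℚ L := IsGalois.of_separable_splitting_field hsep
    set r : L := algebraMap ℚ L r₀ with hrdef
    have hr0 : r ≠ 0 := fun h => h0 (hinj (h.trans (map_zero _).symm))
    obtain ⟨α, hα⟩ : ∃ α : L, α ^ k = r := by
      obtain ⟨α, hα⟩ := exists_root_of_splits' (algebraMap ℚ L)
        (Polynomial.IsSplittingField.splits L (X ^ k - C r₀ : ℚ[X]))
        (by rw [degree_X_pow_sub_C (Nat.pos_of_ne_zero hk0)]; exact_mod_cast hk0)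
      refine ⟨α, ?_⟩
      rw [eval₂_sub, eval₂_pow, eval₂_X, eval₂_C, sub_eq_zero] at hα
      exact hα
    rcases Nat.eq_two_pow_or_exists_odd_prime_and_dvd k with ⟨a, rfl⟩ | ⟨p, hp, hpk, hpodd⟩
    · -- k = 2 ^ a, with 2 ^ a ≥ 3, hence 4 ∣ k
      have ha2 : 2 ≤ a := by
        by_contra h
        interval_cases a <;> omega
      have h4 : 2 ^ a = 4 * 2 ^ (a - 2) := by
        rw [show (4 : ℕ) = 2 ^ 2 from rfl, ← pow_add]
        congr 1
        omega
      have hγ4 : (α ^ (2 ^ (a - 2))) ^ 4 = r := by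
        rw [← pow_mul, mul_comm, ← h4]
        exact hα
      exact quartic_case r₀ h0 (hnp 2 le_rfl).1 (hnp 2 le_rfl).2 _ hγ4 hcomm
    · -- odd prime p ∣ k
      obtain ⟨m, hm⟩ := hpk
      have hm0 : m ≠ 0 := by
        rintro rfl
        rw [mul_zero] at hm
        exact hk0 hm
      have hmk : m < k := by
        rw [hm]
        have := hp.one_lt
        nlinarith [Nat.pos_of_ne_zero hm0]
      have hγp : (α ^ m) ^ p = r := by rw [← pow_mul, mul_comm, ← hm]; exact hα
      -- find a root whose m-th power differs from α ^ m
      obtain ⟨x, hxroot, hxne⟩ : ∃ x : L, x ^ k = r ∧ x ^ m ≠ α ^ m := by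
        by_contra hA
        push_neg at hA
        have hsplit' : Splits (X ^ k - C r : L[X]) := by
          have hmap : ((X ^ k - C r₀ : ℚ[X]).map (algebraMap ℚ L)) = (X ^ k - C r : L[X]) := by
            rw [hrdef]
            simp only [Polynomial.map_sub, Polynomial.map_pow, Polynomial.map_X,
              Polynomial.map_C]
          rw [← hmap]
          exact Polynomial.IsSplittingField.splits L _
        have hcard : (X ^ k - C r : L[X]).roots.card = k := by
          rw [splits_iff_card_roots.mp hsplit', natDegree_X_pow_sub_C]
        have hnodup : (X ^ k - C r : L[X]).roots.Nodup := by
          apply nodup_roots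
          exact separable_X_pow_sub_C _ (Nat.cast_ne_zero.mpr hk0) hr0
        have hsub : (X ^ k - C r : L[X]).roots ⊆ (X ^ m - C (α ^ m) : L[X]).roots := by
          intro z hz
          rw [mem_roots (X_pow_sub_C_ne_zero (Nat.pos_of_ne_zero hk0) r)] at hz
          rw [mem_roots (X_pow_sub_C_ne_zero (Nat.pos_of_ne_zero hm0) (α ^ m))]
          have hzk : z ^ k = r := by
            have := hz
            simpa [IsRoot, sub_eq_zero] using this
          have := hA z hzk
          simp [IsRoot, sub_eq_zero, this]
        have hle := (Multiset.le_iff_subset hnodup).mpr hsub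
        have hcard2 := Multiset.card_le_card hle
        have hcard3 := Polynomial.card_roots' (X ^ m - C (α ^ m) : L[X])
        rw [hcard, natDegree_X_pow_sub_C] at *
        omega
      have hγ'p : (x ^ m) ^ p = r := by rw [← pow_mul, mul_comm, ← hm]; exact hxroot
      exact odd_prime_case r₀ h0 hp hpodd (hnp p hp.two_le).1 (α ^ m) (x ^ m)
        hγp hγ'p hxne hcomm
  · -- k ≤ 2 → abelian
    intro hk σ τ
    interval_cases k
    · -- k = 0
      have hbot : ∀ x : L, ∃ y : ℚ, algebraMap ℚ L y = x := by
        have htop := Polynomial.IsSplittingField.adjoin_rootSet L (X ^ 0 - C r₀ : ℚ[X])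
        have hC : (X ^ 0 - C r₀ : ℚ[X]) = C (1 - r₀) := by
          rw [pow_zero, map_sub, map_one]
        rw [hC, Polynomial.rootSet_C, Algebra.adjoin_empty] at htop
        intro x
        have hx : x ∈ (⊥ : Subalgebra ℚ L) := by rw [htop]; exact Algebra.mem_top
        exact Algebra.mem_bot.mp hx
      ext x
      obtain ⟨y, rfl⟩ := hbot x
      simp [AlgEquiv.mul_apply]
    · -- k = 1
      have hbot : ∀ x : L, ∃ y : ℚ, algebraMap ℚ L y = x := by
        have htop := Polynomial.IsSplittingField.adjoin_rootSet L (X ^ 1 - C r₀ : ℚ[X])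
        have hsub : (X ^ 1 - C r₀ : ℚ[X]).rootSet L ⊆ ((⊥ : Subalgebra ℚ L) : Set L) := by
          intro z hz
          rw [Polynomial.mem_rootSet] at hz
          have hzz : z = algebraMap ℚ L r₀ := by
            have := hz.2
            simpa [sub_eq_zero] using this
          rw [SetLike.mem_coe, Algebra.mem_bot]
          exact ⟨r₀, hzz.symm⟩
        have hle : (⊤ : Subalgebra ℚ L) ≤ ⊥ := by
          rw [← htop]
          exact Algebra.adjoin_le hsub
        intro x
        exact Algebra.mem_bot.mp (hle Algebra.mem_top)
      ext x
      obtain ⟨y, rfl⟩ := hbot x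
      simp [AlgEquiv.mul_apply]
    · -- k = 2
      haveI : FiniteDimensional ℚ L :=
        Polynomial.IsSplittingField.finiteDimensional L (X ^ 2 - C r₀ : ℚ[X])
      have hsep : (X ^ 2 - C r₀ : ℚ[X]).Separable :=
        separable_X_pow_sub_C _ (by norm_num) h0
      haveI : IsGalois ℚ L := IsGalois.of_separable_splitting_field hsep
      obtain ⟨s, hs⟩ : ∃ s : L, s ^ 2 = algebraMap ℚ L r₀ := by
        obtain ⟨s, hs⟩ := exists_root_of_splits' (algebraMap ℚ L)
          (Polynomial.IsSplittingField.splits L (X ^ 2 - C r₀ : ℚ[X]))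
          (by rw [degree_X_pow_sub_C (by norm_num : 0 < 2)]; norm_num)
        refine ⟨s, ?_⟩
        rw [eval₂_sub, eval₂_pow, eval₂_X, eval₂_C, sub_eq_zero] at hs
        exact hs
      have htopalg := Polynomial.IsSplittingField.adjoin_rootSet L (X ^ 2 - C r₀ : ℚ[X])
      have hsub : (X ^ 2 - C r₀ : ℚ[X]).rootSet L ⊆
          ((IntermediateField.adjoin ℚ {s}).toSubalgebra : Set L) := by
        intro z hz
        rw [Polynomial.mem_rootSet] at hz
        have hz2 : z ^ 2 = algebraMap ℚ L r₀ := by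
          have := hz.2
          rw [map_sub, map_pow, aeval_X, aeval_C, sub_eq_zero] at this
          exact this
        have hfac : (z - s) * (z + s) = 0 := by
          rw [← hs] at hz2
          linear_combination hz2
        rw [SetLike.mem_coe, IntermediateField.mem_toSubalgebra]
        rcases mul_eq_zero.mp hfac with h | h
        · rw [sub_eq_zero.mp h]
          exact IntermediateField.mem_adjoin_simple_self ℚ s
        · rw [eq_neg_of_add_eq_zero_left h]
          exact neg_mem (IntermediateField.mem_adjoin_simple_self ℚ s)
      have hall : ∀ x : L, x ∈ IntermediateField.adjoin ℚ {s} := by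
        intro x
        have hx : x ∈ (IntermediateField.adjoin ℚ {s}).toSubalgebra := by
          have := htopalg ▸ Algebra.adjoin_le hsub
          exact this Algebra.mem_top
        exact (IntermediateField.mem_toSubalgebra _ _).mp hx
      have htop : IntermediateField.adjoin ℚ {s} = ⊤ :=
        eq_top_iff.mpr (fun x _ => hall x)
      have hrank : Module.finrank ℚ L ≤ 2 := by
        have h1 : Module.finrank ℚ (IntermediateField.adjoin ℚ {s}) =
            (minpoly ℚ s).natDegree :=
          IntermediateField.adjoin.finrank (IsIntegral.of_finite ℚ s)
        have h2 : minpoly ℚ s ∣ (X ^ 2 - C r₀ : ℚ[X]) := by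
          apply minpoly.dvd
          rw [map_sub, map_pow, aeval_X, aeval_C, hs, sub_self]
        have h3 : (minpoly ℚ s).natDegree ≤ 2 := by
          have := natDegree_le_of_dvd h2 (X_pow_sub_C_ne_zero (by norm_num) r₀)
          rwa [natDegree_X_pow_sub_C] at this
        have h4 : Module.finrank ℚ (⊤ : IntermediateField ℚ L) = Module.finrank ℚ L :=
          IntermediateField.finrank_top'
        rw [← h4, ← htop, h1]
        exact h3
      have hcard : Fintype.card (L ≃ₐ[ℚ] L) ≤ 2 := by
        rw [← Nat.card_eq_fintype_card, IsGalois.card_aut_eq_finrank]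
        exact hrank
      by_cases hσ1 : σ = 1
      · rw [hσ1, one_mul, mul_one]
      by_cases hτ1 : τ = 1
      · rw [hτ1, one_mul, mul_one]
      by_cases hστ : σ = τ
      · rw [hστ]
      exfalso
      letI : DecidableEq (L ≃ₐ[ℚ] L) := Classical.decEq _
      have hcard3 : ({1, σ, τ} : Finset (L ≃ₐ[ℚ] L)).card = 3 := by
        rw [Finset.card_insert_of_notMem (by simp [Ne.symm hσ1, Ne.symm hτ1]),
          Finset.card_insert_of_notMem (by simp [hστ]), Finset.card_singleton]
      have h3le : 3 ≤ Fintype.card (L ≃ₐ[ℚ] L) := by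
        rw [← hcard3]
        exact Finset.card_le_univ _
      omega
end

section
/- Let a, f be coprime positive integers and r a rational number that is not a p-th power for any prime p dividing gcd(a−1, f), and suppose −r is not a square. Define A(r, a mod f) = (1/φ(f))·∏_{p | gcd(a−1,f)}(1 − 1/p)·∏_{p ∤ f}(1 − 1/[F_p:ℚ]), with F_p = ℚ(ζ_p, r^{1/p}). Then A(r, a mod f) > 0. -/
open Polynomial


-- bound on primes p such that r is a p-th power
lemma prime_pow_rat_bound (r : ℚ) (hr0 : r ≠ 0) (hr1 : r ≠ 1) (hrm1 : r ≠ -1)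
    (p : ℕ) (hp : p.Prime) (s : ℚ) (hs : s ^ p = r) :
    p ≤ max r.num.natAbs r.den := by
  have hnum : r.num = s.num ^ p := by rw [← hs, Rat.num_pow]
  have hden : r.den = s.den ^ p := by rw [← hs, Rat.den_pow]
  have hnabs : r.num.natAbs = s.num.natAbs ^ p := by rw [hnum, Int.natAbs_pow]
  by_cases h2 : 2 ≤ s.num.natAbs
  · have : p < s.num.natAbs ^ p :=
      lt_of_lt_of_le (Nat.lt_two_pow_self) (Nat.pow_le_pow_left h2 p)
    rw [← hnabs] at this
    exact le_max_of_le_left this.le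
  · by_cases h3 : 2 ≤ s.den
    · have : p < s.den ^ p :=
        lt_of_lt_of_le (Nat.lt_two_pow_self) (Nat.pow_le_pow_left h3 p)
      rw [← hden] at this
      exact le_max_of_le_right this.le
    · exfalso
      have hden1 : s.den = 1 := by have := s.pos; omega
      push_neg at h2
      interval_cases h : s.num.natAbs
      · have : s = 0 := by
          rw [← Rat.num_eq_zero]; exact Int.natAbs_eq_zero.mp h
        rw [this, zero_pow hp.ne_zero] at hs
        exact hr0 hs.symm
      · have hcast : (s.num : ℚ) = s := by
          conv_rhs => rw [← Rat.num_div_den s]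
          rw [hden1]; simp
        rcases Int.natAbs_eq_iff.mp h with h1 | h1
        · have : s = 1 := by rw [← hcast, h1]; norm_num
          rw [this, one_pow] at hs
          exact hr1 hs.symm
        · have hsm1 : s = -1 := by rw [← hcast, h1]; norm_num
          rw [hsm1] at hs
          rcases Nat.even_or_odd p with he | ho
          · rw [he.neg_one_pow] at hs; exact hr1 hs.symm
          · rw [ho.neg_one_pow] at hs; exact hrm1 hs.symm

lemma fd_aux' (p : ℕ) (r : ℚ) :
    FiniteDimensional ℚ (X ^ p - C r).SplittingField :=
  @Polynomial.IsSplittingField.finiteDimensional _ _ _ _ _ (X ^ p - C r)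
    (Polynomial.IsSplittingField.splittingField _)

lemma finrank_splitting_pos (p : ℕ) (r : ℚ) :
    0 < Module.finrank ℚ (X ^ p - C r).SplittingField := by
  have := fd_aux' p r
  exact Module.finrank_pos

lemma p_dvd_finrank (p : ℕ) (hp : p.Prime) (r : ℚ)
    (hnp : ∀ s : ℚ, s ^ p ≠ r) :
    p ∣ Module.finrank ℚ (X ^ p - C r).SplittingField := by
  have := fd_aux' p r
  set F := (X ^ p - C r).SplittingField
  have hirr : Irreducible (X ^ p - C r) :=
    X_pow_sub_C_irreducible_of_prime hp hnp
  have hsplits : Splits ((X ^ p - C r).map (algebraMap ℚ F)) :=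
    SplittingField.splits _
  have hdeg : (X ^ p - C r).degree ≠ 0 := by
    rw [degree_X_pow_sub_C hp.pos]
    exact_mod_cast hp.ne_zero
  obtain ⟨α, hα⟩ := hsplits.exists_eval_eq_zero (by rwa [degree_map])
  have haev : aeval α (X ^ p - C r) = 0 := by rwa [aeval_def, eval₂_eq_eval_map]
  have hmin : X ^ p - C r = minpoly ℚ α :=
    minpoly.eq_of_irreducible_of_monic hirr haev (monic_X_pow_sub_C r hp.ne_zero)
  have hd := minpoly.degree_dvd (K := ℚ) (x := α) (IsIntegral.of_finite ℚ α)
  rwa [← hmin, natDegree_X_pow_sub_C] at hd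

lemma pm1_dvd_finrank (p : ℕ) (hp : p.Prime) (r : ℚ) (hr0 : r ≠ 0) :
    p - 1 ∣ Module.finrank ℚ (X ^ p - C r).SplittingField := by
  classical
  have := fd_aux' p r
  set F := (X ^ p - C r).SplittingField with hF
  have hchar : CharZero F := charZero_of_injective_algebraMap (algebraMap ℚ F).injective
  have hsplits : Splits ((X ^ p - C r).map (algebraMap ℚ F)) := SplittingField.splits _
  have hsep : ((X ^ p - C r).map (algebraMap ℚ F)).Separable :=
    (separable_X_pow_sub_C r (by exact_mod_cast hp.ne_zero) hr0).map
  have hcard : ((X ^ p - C r).map (algebraMap ℚ F)).roots.toFinset.card = p := by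
    rw [Multiset.toFinset_card_of_nodup (nodup_roots hsep)]
    rw [(splits_iff_card_roots.mp hsplits), natDegree_map, natDegree_X_pow_sub_C]
  obtain ⟨α, hαm, β, hβm, hne⟩ := Finset.one_lt_card.mp (hcard ▸ hp.one_lt)
  have hroot : ∀ x ∈ ((X ^ p - C r).map (algebraMap ℚ F)).roots.toFinset,
      x ^ p = algebraMap ℚ F r := by
    intro x hx
    rw [Multiset.mem_toFinset, mem_roots'] at hx
    have := hx.2
    simp only [IsRoot.def, Polynomial.map_sub, Polynomial.map_pow, map_X, map_C,
      eval_sub, eval_pow, eval_X, eval_C, sub_eq_zero] at this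
    exact this
  have hαr := hroot α hαm
  have hβr := hroot β hβm
  have hir : algebraMap ℚ F r ≠ 0 := fun h =>
    hr0 ((_root_.map_eq_zero (algebraMap ℚ F)).mp h)
  have hα0 : α ≠ 0 := by
    intro h
    rw [h, zero_pow hp.ne_zero] at hαr
    exact hir hαr.symm
  set ζ : F := β * α⁻¹ with hζ
  have hζp : ζ ^ p = 1 := by
    rw [hζ, mul_pow, inv_pow, hβr, hαr, mul_inv_cancel₀ hir]
  have hζ1 : ζ ≠ 1 := fun h => hne ((mul_inv_eq_one₀ hα0).mp h).symm
  have horder : orderOf ζ = p := by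
    have hdvd : orderOf ζ ∣ p := orderOf_dvd_of_pow_eq_one hζp
    rcases (Nat.Prime.eq_one_or_self_of_dvd hp _ hdvd) with h1 | h2
    · exact absurd (orderOf_eq_one_iff.mp h1) hζ1
    · exact h2
  have hprim : IsPrimitiveRoot ζ p :=
    ⟨hζp, fun l hl => horder ▸ orderOf_dvd_of_pow_eq_one hl⟩
  have hmin : cyclotomic p ℚ = minpoly ℚ ζ := cyclotomic_eq_minpoly_rat hprim hp.pos
  have hd := minpoly.degree_dvd (K := ℚ) (x := ζ) (IsIntegral.of_finite ℚ ζ)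
  rwa [← hmin, natDegree_cyclotomic, Nat.totient_prime hp] at hd

lemma two_le_finrank (p : ℕ) (hp : p.Prime) (r : ℚ) (hr0 : r ≠ 0)
    (hs : p = 2 → ¬∃ s : ℚ, s ^ 2 = r) :
    2 ≤ Module.finrank ℚ (X ^ p - C r).SplittingField := by
  have hpos := finrank_splitting_pos p r
  by_cases h2 : p = 2
  · subst h2
    have hnp : ∀ s : ℚ, s ^ 2 ≠ r := fun s h => (hs rfl) ⟨s, h⟩
    exact Nat.le_of_dvd hpos (p_dvd_finrank 2 hp r hnp)
  · have h3 : 3 ≤ p := (hp.two_le).lt_of_ne (Ne.symm h2)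
    have := Nat.le_of_dvd hpos (pm1_dvd_finrank p hp r hr0)
    omega

lemma mul_le_finrank (p : ℕ) (hp : p.Prime) (r : ℚ) (hr0 : r ≠ 0)
    (hnp : ∀ s : ℚ, s ^ p ≠ r) :
    p * (p - 1) ≤ Module.finrank ℚ (X ^ p - C r).SplittingField := by
  have hpos := finrank_splitting_pos p r
  have hcop : Nat.Coprime p (p - 1) := by
    have hd : Nat.gcd p (p - 1) ∣ p - (p - 1) :=
      Nat.dvd_sub (Nat.gcd_dvd_left _ _) (Nat.gcd_dvd_right _ _)
    have h1 : p - (p - 1) = 1 := by have := hp.pos; omega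
    rw [h1] at hd
    exact Nat.dvd_one.mp hd
  exact Nat.le_of_dvd hpos
    (hcop.mul_dvd_of_dvd_of_dvd (p_dvd_finrank p hp r hnp) (pm1_dvd_finrank p hp r hr0))

/-- The Artin constant `A(r, a mod f)` for primes in the arithmetic progression `a mod f`
with prescribed primitive root `r` is positive (here `[F_p:ℚ]` is the degree of the
splitting field of `X^p - r`). -/
theorem artin_constant_progression_pos (a f : ℕ) (ha : 0 < a) (hf : 0 < f)
    (hcop : Nat.Coprime a f) (r : ℚ) (hr0 : r ≠ 0) (hr1 : r ≠ 1) (hrm1 : r ≠ -1)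
    (hnsq : ¬∃ s : ℚ, s ^ 2 = r) (hnsqneg : ¬∃ s : ℚ, s ^ 2 = -r)
    (hnp : ∀ p : ℕ, p.Prime → p ∣ Nat.gcd (a - 1) f → ¬∃ s : ℚ, s ^ p = r) :
    Multipliable (fun q : {p : ℕ // p.Prime ∧ ¬p ∣ f} =>
      (1 : ℝ) - 1 / (Module.finrank ℚ (X ^ q.1 - C r).SplittingField : ℝ)) ∧
    0 < (1 / (Nat.totient f : ℝ))
        * (∏ p ∈ (Nat.gcd (a - 1) f).primeFactors, ((1 : ℝ) - 1 / (p : ℝ)))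
        * ∏' q : {p : ℕ // p.Prime ∧ ¬p ∣ f},
            ((1 : ℝ) - 1 / (Module.finrank ℚ (X ^ q.1 - C r).SplittingField : ℝ)) := by
  set T := {p : ℕ // p.Prime ∧ ¬p ∣ f}
  set d : T → ℕ := fun q => Module.finrank ℚ (X ^ q.1 - C r).SplittingField with hd
  set g : T → ℝ := fun q => (1 : ℝ) - 1 / (d q : ℝ) with hg
  -- every factor is in [1/2, 1)
  have hd2 : ∀ q : T, 2 ≤ d q := fun q =>
    two_le_finrank q.1 q.2.1 r hr0 (fun h2 => h2 ▸ hnsq)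
  have hdR : ∀ q : T, (2 : ℝ) ≤ (d q : ℝ) := fun q => by exact_mod_cast hd2 q
  have hgpos : ∀ q : T, 0 < g q := by
    intro q
    have h2 := hdR q
    have : 1 / (d q : ℝ) ≤ 1 / 2 := by
      apply one_div_le_one_div_of_le <;> linarith
    simp only [hg]; linarith
  have hglt : ∀ q : T, g q ≤ 1 := by
    intro q
    have h2 := hdR q
    have : 0 < 1 / (d q : ℝ) := by positivity
    simp only [hg]; linarith
  -- log bound : ‖log (g q)‖ ≤ 2 / d q
  have hlogb : ∀ q : T, ‖Real.log (g q)‖ ≤ 2 / (d q : ℝ) := by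
    intro q
    have h2 := hdR q
    have hgq := hgpos q
    have hghalf : (1 : ℝ) / 2 ≤ g q := by
      have : 1 / (d q : ℝ) ≤ 1 / 2 := by apply one_div_le_one_div_of_le <;> linarith
      simp only [hg]; linarith
    have hlogle : Real.log (g q) ≤ 0 := Real.log_nonpos (le_of_lt hgq) (hglt q)
    rw [Real.norm_eq_abs, abs_of_nonpos hlogle, ← Real.log_inv]
    have hbnd : Real.log (g q)⁻¹ ≤ (g q)⁻¹ - 1 :=
      Real.log_le_sub_one_of_pos (by positivity)
    have : (g q)⁻¹ - 1 ≤ 2 / (d q : ℝ) := by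
      rw [inv_eq_one_div, div_sub' (ne_of_gt hgq), div_le_div_iff₀ hgq (by linarith)]
      have h1 : 1 - g q = 1 / (d q : ℝ) := by simp only [hg]; ring
      have haux : (1 / (d q : ℝ)) * (d q : ℝ) = 1 :=
        one_div_mul_cancel (by linarith : (d q : ℝ) ≠ 0)
      have key : (1 - g q) * (d q : ℝ) = 1 := by rw [h1]; exact haux
      nlinarith [key, hghalf]
    linarith
  -- the set of q where r is a q-th power is finite
  have hfin : {q : T | ∃ s : ℚ, s ^ q.1 = r}.Finite := by
    apply Set.Finite.subset (Set.Finite.preimage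
      (Subtype.val_injective.injOn) (Set.finite_Iic (max r.num.natAbs r.den)))
    rintro q ⟨s, hs⟩
    exact prime_pow_rat_bound r hr0 hr1 hrm1 q.1 q.2.1 s hs
  -- eventual bound by 4/q^2
  have hev : ∀ᶠ q : T in Filter.cofinite, ‖Real.log (g q)‖ ≤ 4 / (q.1 : ℝ) ^ 2 := by
    rw [Filter.eventually_cofinite]
    apply Set.Finite.subset hfin
    intro q hq
    simp only [Set.mem_setOf_eq, not_le] at hq
    by_contra hns
    apply absurd hq
    push_neg
    simp only [Set.mem_setOf_eq] at hns
    push_neg at hns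
    -- r not a q-th power : d q ≥ q (q-1) ≥ q^2/2
    have hge : q.1 * (q.1 - 1) ≤ d q := mul_le_finrank q.1 q.2.1 r hr0 hns
    have hq2 := q.2.1.two_le
    have hgeR : ((q.1 : ℝ) * ((q.1 : ℝ) - 1)) ≤ (d q : ℝ) := by
      have : ((q.1 * (q.1 - 1) : ℕ) : ℝ) ≤ (d q : ℝ) := by exact_mod_cast hge
      rw [Nat.cast_mul, Nat.cast_sub (by omega)] at this
      simpa using this
    have hqR : (2 : ℝ) ≤ (q.1 : ℝ) := by exact_mod_cast hq2
    have hhalf : (q.1 : ℝ) ^ 2 / 2 ≤ (q.1 : ℝ) * ((q.1 : ℝ) - 1) := by nlinarith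
    calc ‖Real.log (g q)‖ ≤ 2 / (d q : ℝ) := hlogb q
      _ ≤ 2 / ((q.1 : ℝ) ^ 2 / 2) := by
          apply div_le_div_of_nonneg_left (by norm_num) (by positivity)
          linarith
      _ = 4 / (q.1 : ℝ) ^ 2 := by field_simp; ring
  -- summability of the bound
  have hsum4 : Summable (fun q : T => 4 / (q.1 : ℝ) ^ 2) := by
    have h1 : Summable (fun n : ℕ => 4 * (1 / (n : ℝ) ^ 2)) :=
      (Real.summable_one_div_nat_pow.mpr (by norm_num)).mul_left 4
    have h2 := h1.comp_injective (Subtype.val_injective (p := fun p : ℕ => p.Prime ∧ ¬p ∣ f))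
    apply h2.congr
    intro q
    simp [Function.comp]
    ring
  have hlog : Summable (fun q : T => Real.log (g q)) :=
    Summable.of_norm_bounded_eventually hsum4 hev
  have hmult : Multipliable g :=
    Real.multipliable_of_summable_log hgpos hlog
  have htprod : ∏' q : T, g q = Real.exp (∑' q : T, Real.log (g q)) :=
    (Real.rexp_tsum_eq_tprod hgpos hlog).symm
  have htpos : 0 < ∏' q : T, g q := htprod ▸ Real.exp_pos _
  refine ⟨hmult, ?_⟩
  have h1 : (0 : ℝ) < 1 / (Nat.totient f : ℝ) := by
    have := Nat.totient_pos.mpr hf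
    positivity
  have h2 : (0 : ℝ) < ∏ p ∈ (Nat.gcd (a - 1) f).primeFactors, ((1 : ℝ) - 1 / (p : ℝ)) := by
    apply Finset.prod_pos
    intro p hp
    have hpp : p.Prime := Nat.prime_of_mem_primeFactors hp
    have : (2 : ℝ) ≤ (p : ℝ) := by exact_mod_cast hpp.two_le
    have : 1 / (p : ℝ) ≤ 1 / 2 := by apply one_div_le_one_div_of_le <;> linarith
    linarith
  exact mul_pos (mul_pos h1 h2) htpos
end
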